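/- arXiv:1901.00694 — 7 statements merged into one kernel-verified Lean document; each statement's English description precedes it below -/
import Mathlib

section
/- Let f be a monic polynomial of degree d ≥ 1 with simple (distinct) zeros z_1, …, z_d ∈ ℂ ∖ {0}, and let g be a complex polynomial of degree at most d. For every n ≥ deg(g), the d×d matrix E with entries e_{l,m} = k_{n+d}(z_l, z_m) is invertible; moreover there exists a unique polynomial q of degree at most n minimizing ‖g − p f‖_ω over all polynomials p of degree at most n, and for every z ∈ ℂ one has g(z) − q(z) f(z) = L(z) · E^{-1} · g_Z^t, where L(z) = (k_{n+d}(z, z_1), …, k_{n+d}(z, z_d)) is a row vector and g_Z = (g(z_1), …, g(z_d)). -/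
/-- The squared weighted `H²_ω` norm of a polynomial `g = ∑ a_k z^k`,
namely `∑_k |a_k|² ω_k`. -/
noncomputable def wnormSq (ω : ℕ → ℝ) (g : Polynomial ℂ) : ℝ :=
  ∑ k ∈ Finset.range (g.natDegree + 1), ‖g.coeff k‖ ^ 2 * ω k

/-- The partial reproducing kernel `k_m(z,w) = ∑_{k=0}^m \overline{w}^k z^k / ω_k`. -/
noncomputable def wker (ω : ℕ → ℝ) (m : ℕ) (z w : ℂ) : ℂ :=
  ∑ k ∈ Finset.range (m + 1), (starRingEnd ℂ w) ^ k * z ^ k / (ω k : ℂ)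

open Polynomial Finset Matrix Complex

/-- kernel polynomial -/
noncomputable def Kpoly (ω : ℕ → ℝ) (N : ℕ) (w : ℂ) : Polynomial ℂ :=
  ∑ k ∈ Finset.range (N + 1), Polynomial.monomial k ((starRingEnd ℂ w) ^ k / (ω k : ℂ))

lemma Kpoly_coeff (ω : ℕ → ℝ) (N : ℕ) (w : ℂ) (j : ℕ) :
    (Kpoly ω N w).coeff j = if j ≤ N then (starRingEnd ℂ w) ^ j / (ω j : ℂ) else 0 := by
  unfold Kpoly
  rw [Polynomial.finset_sum_coeff]
  simp [Polynomial.coeff_monomial, Nat.lt_succ_iff]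

lemma Kpoly_natDegree_le (ω : ℕ → ℝ) (N : ℕ) (w : ℂ) : (Kpoly ω N w).natDegree ≤ N := by
  rw [Polynomial.natDegree_le_iff_coeff_eq_zero]
  intro j hj
  rw [Kpoly_coeff, if_neg (by omega)]

lemma Kpoly_eval (ω : ℕ → ℝ) (N : ℕ) (w x : ℂ) : (Kpoly ω N w).eval x = wker ω N x w := by
  unfold Kpoly wker
  rw [Polynomial.eval_finset_sum]
  refine Finset.sum_congr rfl fun k _ => ?_
  rw [Polynomial.eval_monomial]; ring

lemma inner_Kpoly (ω : ℕ → ℝ) (hωpos : ∀ k, 0 < ω k) (N : ℕ) (w : ℂ)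
    (u : Polynomial ℂ) (hu : u.natDegree ≤ N) :
    ∑ k ∈ Finset.range (N + 1), u.coeff k * (starRingEnd ℂ) ((Kpoly ω N w).coeff k) * (ω k : ℂ)
      = u.eval w := by
  rw [Polynomial.eval_eq_sum_range' (lt_of_le_of_lt hu (Nat.lt_succ_self N))]
  refine Finset.sum_congr rfl fun k hk => ?_
  rw [Finset.mem_range, Nat.lt_succ_iff] at hk
  rw [Kpoly_coeff, if_pos hk, map_div₀, map_pow, Complex.conj_conj, Complex.conj_ofReal]
  have : (ω k : ℂ) ≠ 0 := Complex.ofReal_ne_zero.mpr (ne_of_gt (hωpos k))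
  field_simp

lemma wnormSq_eq' (ω : ℕ → ℝ) (N : ℕ) (g : Polynomial ℂ) (hg : g.natDegree ≤ N) :
    wnormSq ω g = ∑ k ∈ Finset.range (N + 1), ‖g.coeff k‖ ^ 2 * ω k := by
  apply Finset.sum_subset
  · intro k hk; simp only [Finset.mem_range] at *; omega
  · intro k _ hk
    simp only [Finset.mem_range, not_lt] at hk
    rw [Polynomial.coeff_eq_zero_of_natDegree_lt (by omega)]
    simp

lemma poly_eq_zero_of_coeffs (N : ℕ) (u : Polynomial ℂ) (hu : u.natDegree ≤ N)
    (h : ∀ k, k ≤ N → u.coeff k = 0) : u = 0 := by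
  ext k
  rcases le_or_gt k N with hk | hk
  · simpa using h k hk
  · simp [u.coeff_eq_zero_of_natDegree_lt (lt_of_le_of_lt hu hk)]

lemma det_ne (ω : ℕ → ℝ) (hωpos : ∀ k, 0 < ω k) {d N : ℕ} (hdN : d ≤ N + 1)
    {z : Fin d → ℂ} (hzinj : Function.Injective z)
    {E : Matrix (Fin d) (Fin d) ℂ}
    (hE : ∀ l m, E l m = wker ω N (z l) (z m)) : E.det ≠ 0 := by
  intro h0
  obtain ⟨v, hv, hEv⟩ := Matrix.exists_mulVec_eq_zero_iff.mpr h0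
  set y : ℕ → ℂ := fun k => ∑ m, (starRingEnd ℂ (z m)) ^ k * v m with hy
  have hconjy : ∀ k, (starRingEnd ℂ) (y k) = ∑ l, (z l) ^ k * (starRingEnd ℂ) (v l) := by
    intro k
    rw [hy]; simp only [map_sum, _root_.map_mul, map_pow, Complex.conj_conj]
  have h1 : ∑ k ∈ Finset.range (N + 1), (starRingEnd ℂ) (y k) * y k / (ω k : ℂ) = 0 := by
    have hterm : ∀ k, (starRingEnd ℂ) (y k) * y k / (ω k : ℂ)
        = ∑ l, ∑ m, (z l) ^ k * (starRingEnd ℂ) (v l) * ((starRingEnd ℂ (z m)) ^ k * v m)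
            / (ω k : ℂ) := by
      intro k
      rw [hconjy, hy, Finset.sum_mul_sum]
      simp only [Finset.sum_div]
    calc ∑ k ∈ Finset.range (N + 1), (starRingEnd ℂ) (y k) * y k / (ω k : ℂ)
        = ∑ k ∈ Finset.range (N + 1), ∑ l, ∑ m,
            (z l) ^ k * (starRingEnd ℂ) (v l) * ((starRingEnd ℂ (z m)) ^ k * v m) / (ω k : ℂ) :=
          Finset.sum_congr rfl fun k _ => hterm k
      _ = ∑ l, ∑ k ∈ Finset.range (N + 1), ∑ m,
            (z l) ^ k * (starRingEnd ℂ) (v l) * ((starRingEnd ℂ (z m)) ^ k * v m) / (ω k : ℂ) :=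
          Finset.sum_comm
      _ = ∑ l, (starRingEnd ℂ) (v l) * (E *ᵥ v) l := by
          refine Finset.sum_congr rfl fun l _ => ?_
          simp only [Matrix.mulVec, dotProduct, hE, wker, Finset.mul_sum,
            Finset.sum_mul, Finset.sum_div]
          rw [Finset.sum_comm]
          exact Finset.sum_congr rfl fun m _ => Finset.sum_congr rfl fun k _ => by ring
      _ = 0 := by simp [hEv]
  have h2 : ∑ k ∈ Finset.range (N + 1), Complex.normSq (y k) / ω k = 0 := by
    simp only [← Complex.normSq_eq_conj_mul_self] at h1
    have h3 : ((∑ k ∈ Finset.range (N + 1), Complex.normSq (y k) / ω k : ℝ) : ℂ) = 0 := by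
      push_cast
      exact h1
    exact_mod_cast h3
  have hyzero : ∀ k, k ≤ N → y k = 0 := by
    intro k hk
    have hnn : ∀ i ∈ Finset.range (N + 1), 0 ≤ Complex.normSq (y i) / ω i :=
      fun i _ => div_nonneg (Complex.normSq_nonneg _) (le_of_lt (hωpos i))
    have h4 := (Finset.sum_eq_zero_iff_of_nonneg hnn).mp h2 k (Finset.mem_range.mpr (by omega))
    have h5 : Complex.normSq (y k) = 0 := by
      rcases div_eq_zero_iff.mp h4 with h | h
      · exact h
      · exact absurd h (ne_of_gt (hωpos k))
    exact Complex.normSq_eq_zero.mp h5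
  set W := Matrix.vandermonde (fun m => starRingEnd ℂ (z m)) with hW
  have hWdet : W.det ≠ 0 :=
    Matrix.det_vandermonde_ne_zero_iff.mpr (fun a b hab => hzinj (star_injective hab))
  have hvW : Matrix.vecMul v W = 0 := by
    funext k
    have hk := k.isLt
    have hkN : (k : ℕ) ≤ N := by omega
    calc Matrix.vecMul v W k = ∑ m, v m * (starRingEnd ℂ (z m)) ^ (k : ℕ) := by
          simp [Matrix.vecMul, dotProduct, hW, Matrix.vandermonde]
      _ = y (k : ℕ) := by rw [hy]; exact Finset.sum_congr rfl fun m _ => mul_comm _ _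
      _ = 0 := hyzero _ hkN
  have hv0 : v = 0 := by
    have h4 := congrArg (fun u => Matrix.vecMul u W⁻¹) hvW
    simpa [Matrix.vecMul_vecMul, Matrix.mul_nonsing_inv W (Ne.isUnit hWdet)] using h4
  exact hv hv0

theorem stmt0
    (ω : ℕ → ℝ) (hω0 : ω 0 = 1) (hωpos : ∀ k, 0 < ω k)
    (hωlim : Filter.Tendsto (fun k => ω k / ω (k + 1)) Filter.atTop (nhds 1))
    (d : ℕ) (hd : 0 < d) (z : Fin d → ℂ)
    (hzinj : Function.Injective z) (hz0 : ∀ i, z i ≠ 0)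
    (f : Polynomial ℂ) (hf : f = ∏ i, (Polynomial.X - Polynomial.C (z i)))
    (g : Polynomial ℂ) (hgd : g.natDegree ≤ d)
    (n : ℕ) (hn : g.natDegree ≤ n)
    (E : Matrix (Fin d) (Fin d) ℂ)
    (hE : ∀ l m, E l m = wker ω (n + d) (z l) (z m)) :
    IsUnit E.det ∧
    (∃! q : Polynomial ℂ, q.natDegree ≤ n ∧
      ∀ p : Polynomial ℂ, p.natDegree ≤ n →
        wnormSq ω (g - q * f) ≤ wnormSq ω (g - p * f)) ∧
    (∀ q : Polynomial ℂ, q.natDegree ≤ n →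
      (∀ p : Polynomial ℂ, p.natDegree ≤ n →
        wnormSq ω (g - q * f) ≤ wnormSq ω (g - p * f)) →
      ∀ w : ℂ, g.eval w - q.eval w * f.eval w =
        ∑ l, ∑ m, wker ω (n + d) w (z l) * E⁻¹ l m * g.eval (z m)) := by
  set N := n + d with hN
  -- basic facts about f
  have hfm : f.Monic := by
    rw [hf]; exact monic_prod_of_monic _ _ fun i _ => monic_X_sub_C _
  have hfd : f.natDegree = d := by
    rw [hf, Polynomial.natDegree_prod _ _ fun i _ => X_sub_C_ne_zero (z i)]
    simp
  have hfz : ∀ j, f.eval (z j) = 0 := by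
    intro j
    rw [hf, Polynomial.eval_prod]
    exact Finset.prod_eq_zero (Finset.mem_univ j) (by simp)
  have hfne : f ≠ 0 := hfm.ne_zero
  -- Part 1
  have hdet : E.det ≠ 0 := det_ne ω hωpos (by omega) hzinj hE
  have hdetU : IsUnit E.det := Ne.isUnit hdet
  refine ⟨hdetU, ?_⟩
  -- the minimizing remainder r
  set gZ : Fin d → ℂ := fun m => g.eval (z m) with hgZ
  set c : Fin d → ℂ := E⁻¹ *ᵥ gZ with hc
  set r : Polynomial ℂ := ∑ l, Polynomial.C (c l) * Kpoly ω N (z l) with hr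
  have hrcoeff : ∀ k, r.coeff k = ∑ l, c l * (Kpoly ω N (z l)).coeff k := by
    intro k
    rw [hr, Polynomial.finset_sum_coeff]
    exact Finset.sum_congr rfl fun l _ => Polynomial.coeff_C_mul _
  have hrdeg : r.natDegree ≤ N := by
    rw [Polynomial.natDegree_le_iff_coeff_eq_zero]
    intro j hj
    rw [hrcoeff]
    refine Finset.sum_eq_zero fun l _ => ?_
    rw [Kpoly_coeff, if_neg (by omega), mul_zero]
  have hreval : ∀ x, r.eval x = ∑ l, c l * wker ω N x (z l) := by
    intro x
    rw [hr, Polynomial.eval_finset_sum]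
    exact Finset.sum_congr rfl fun l _ => by rw [Polynomial.eval_mul, Polynomial.eval_C, Kpoly_eval]
  have hrz : ∀ j, r.eval (z j) = g.eval (z j) := by
    intro j
    rw [hreval]
    have : ∑ l, c l * wker ω N (z j) (z l) = (E *ᵥ c) j := by
      simp only [Matrix.mulVec, dotProduct, hE]
      exact Finset.sum_congr rfl fun l _ => mul_comm _ _
    rw [this, hc, Matrix.mulVec_mulVec, Matrix.mul_nonsing_inv E hdetU, Matrix.one_mulVec]
  -- shorthand for the truncated norm
  set S : Polynomial ℂ → ℝ := fun t => ∑ k ∈ Finset.range (N + 1), ‖t.coeff k‖ ^ 2 * ω k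
    with hS
  have hSnonneg : ∀ t, 0 ≤ S t := by
    intro t
    exact Finset.sum_nonneg fun k _ => mul_nonneg (sq_nonneg _) (le_of_lt (hωpos k))
  -- Pythagoras: for feasible h, S h = S r + S (h - r)
  have hpyth : ∀ h : Polynomial ℂ, h.natDegree ≤ N → (∀ j, h.eval (z j) = g.eval (z j)) →
      S h = S r + S (h - r) := by
    intro h hhdeg hhz
    set u : Polynomial ℂ := h - r with hu
    have hudeg : u.natDegree ≤ N :=
      le_trans (Polynomial.natDegree_sub_le _ _) (max_le hhdeg hrdeg)
    have huz : ∀ j, u.eval (z j) = 0 := by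
      intro j; rw [hu, Polynomial.eval_sub, hhz, hrz, sub_self]
    -- inner product of u with r vanishes
    have hinner : ∑ k ∈ Finset.range (N + 1),
        u.coeff k * (starRingEnd ℂ) (r.coeff k) * (ω k : ℂ) = 0 := by
      have : ∀ k ∈ Finset.range (N + 1), u.coeff k * (starRingEnd ℂ) (r.coeff k) * (ω k : ℂ)
          = ∑ l, (starRingEnd ℂ) (c l) *
              (u.coeff k * (starRingEnd ℂ) ((Kpoly ω N (z l)).coeff k) * (ω k : ℂ)) := by
        intro k _
        rw [hrcoeff, map_sum, Finset.mul_sum, Finset.sum_mul]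
        refine Finset.sum_congr rfl fun l _ => ?_
        rw [_root_.map_mul]; ring
      rw [Finset.sum_congr rfl this, Finset.sum_comm]
      refine Finset.sum_eq_zero fun l _ => ?_
      rw [← Finset.mul_sum, inner_Kpoly ω hωpos N (z l) u hudeg, huz, mul_zero]
    have hcoeff : ∀ k, h.coeff k = r.coeff k + u.coeff k := by
      intro k; rw [hu]; simp [Polynomial.coeff_sub]
    have hnormterm : ∀ k, ‖h.coeff k‖ ^ 2 * ω k
        = ‖r.coeff k‖ ^ 2 * ω k + ‖u.coeff k‖ ^ 2 * ω k
          + 2 * ((u.coeff k * (starRingEnd ℂ) (r.coeff k) * (ω k : ℂ)).re) := by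
      intro k
      rw [hcoeff k]
      have hre : (u.coeff k * (starRingEnd ℂ) (r.coeff k) * (ω k : ℂ)).re
          = (u.coeff k * (starRingEnd ℂ) (r.coeff k)).re * ω k := by
        simp [Complex.mul_re, Complex.ofReal_re, Complex.ofReal_im]
      rw [hre]
      simp only [Complex.sq_norm]
      rw [Complex.normSq_add]
      have hsym : (r.coeff k * (starRingEnd ℂ) (u.coeff k)).re
          = (u.coeff k * (starRingEnd ℂ) (r.coeff k)).re := by
        simp [Complex.mul_re]; ring
      rw [hsym]
      ring
    have : S h = S r + S u + 2 * (∑ k ∈ Finset.range (N + 1),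
        u.coeff k * (starRingEnd ℂ) (r.coeff k) * (ω k : ℂ)).re := by
      rw [hS]
      simp only [Complex.re_sum]
      rw [Finset.sum_congr rfl fun k _ => hnormterm k]
      rw [Finset.sum_add_distrib, Finset.sum_add_distrib, ← Finset.mul_sum]
    rw [this, hinner]
    simp
  -- the canonical minimizer q₀
  have hdvd : f ∣ g - r := by
    rw [hf]
    refine Finset.prod_dvd_of_coprime ?_ ?_
    · exact (Polynomial.pairwise_coprime_X_sub_C hzinj).set_pairwise _
    · intro i _
      rw [Polynomial.dvd_iff_isRoot]
      simp [Polynomial.IsRoot, hrz i]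
  set q0 : Polynomial ℂ := (g - r) /ₘ f with hq0
  have hgr : g - q0 * f = r := by
    have h1 : (g - r) %ₘ f = 0 := (Polynomial.modByMonic_eq_zero_iff_dvd hfm).mpr hdvd
    have h2 := Polynomial.modByMonic_add_div (g - r) f
    rw [h1, zero_add] at h2
    rw [hq0]
    linear_combination -h2
  have hgrdeg : (g - r).natDegree ≤ N :=
    le_trans (Polynomial.natDegree_sub_le _ _) (max_le (le_trans hn (by omega)) hrdeg)
  have hq0deg : q0.natDegree ≤ n := by
    rw [hq0, Polynomial.natDegree_divByMonic _ hfm, hfd]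
    omega
  -- degree bound for g - p * f
  have hdegfeas : ∀ p : Polynomial ℂ, p.natDegree ≤ n → (g - p * f).natDegree ≤ N := by
    intro p hp
    refine le_trans (Polynomial.natDegree_sub_le _ _) (max_le (le_trans hn (by omega)) ?_)
    exact le_trans (Polynomial.natDegree_mul_le) (by rw [hfd]; omega)
  have hfeasz : ∀ p : Polynomial ℂ, ∀ j, (g - p * f).eval (z j) = g.eval (z j) := by
    intro p j
    rw [Polynomial.eval_sub, Polynomial.eval_mul, hfz, mul_zero, sub_zero]
  have hq0min : ∀ p : Polynomial ℂ, p.natDegree ≤ n →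
      wnormSq ω (g - q0 * f) ≤ wnormSq ω (g - p * f) := by
    intro p hp
    rw [wnormSq_eq' ω N _ (hdegfeas q0 hq0deg), wnormSq_eq' ω N _ (hdegfeas p hp)]
    have h1 := hpyth (g - p * f) (hdegfeas p hp) (hfeasz p)
    have h2 : S (g - q0 * f) = S r := by rw [hgr]
    have := hSnonneg ((g - p * f) - r)
    change S (g - q0 * f) ≤ S (g - p * f)
    rw [h2, h1]
    linarith
  -- any minimizer q' satisfies g - q' * f = r
  have hforce : ∀ q' : Polynomial ℂ, q'.natDegree ≤ n →
      (∀ p : Polynomial ℂ, p.natDegree ≤ n →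
        wnormSq ω (g - q' * f) ≤ wnormSq ω (g - p * f)) → g - q' * f = r := by
    intro q' hq' hmin
    have h1 : wnormSq ω (g - q' * f) ≤ wnormSq ω (g - q0 * f) := hmin q0 hq0deg
    rw [wnormSq_eq' ω N _ (hdegfeas q' hq'), wnormSq_eq' ω N _ (hdegfeas q0 hq0deg)] at h1
    change S (g - q' * f) ≤ S (g - q0 * f) at h1
    have h2 := hpyth (g - q' * f) (hdegfeas q' hq') (hfeasz q')
    rw [hgr] at h1
    have h3 : S ((g - q' * f) - r) = 0 := by
      have := hSnonneg ((g - q' * f) - r)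
      linarith
    have hudeg : ((g - q' * f) - r).natDegree ≤ N :=
      le_trans (Polynomial.natDegree_sub_le _ _) (max_le (hdegfeas q' hq') hrdeg)
    have hzero : (g - q' * f) - r = 0 := by
      refine poly_eq_zero_of_coeffs N _ hudeg fun k hk => ?_
      have hnn : ∀ i ∈ Finset.range (N + 1),
          0 ≤ ‖((g - q' * f) - r).coeff i‖ ^ 2 * ω i :=
        fun i _ => mul_nonneg (sq_nonneg _) (le_of_lt (hωpos i))
      have h4 := (Finset.sum_eq_zero_iff_of_nonneg hnn).mp h3 k (Finset.mem_range.mpr (by omega))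
      have h5 : ‖((g - q' * f) - r).coeff k‖ ^ 2 = 0 := by
        rcases mul_eq_zero.mp h4 with h | h
        · exact h
        · exact absurd h (ne_of_gt (hωpos k))
      exact norm_eq_zero.mp (by simpa using sq_eq_zero_iff.mp h5)
    exact sub_eq_zero.mp hzero
  refine ⟨⟨q0, ⟨hq0deg, hq0min⟩, ?_⟩, ?_⟩
  · rintro q' ⟨hq', hmin⟩
    have h1 := hforce q' hq' hmin
    have h2 : q' * f = q0 * f := by linear_combination hgr - h1
    exact mul_right_cancel₀ hfne h2
  · intro q hq hmin w
    have hrw := hforce q hq hmin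
    have heq : g.eval w - q.eval w * f.eval w = r.eval w := by
      rw [← hrw]; simp [Polynomial.eval_sub, Polynomial.eval_mul]
    rw [heq, hreval]
    refine Finset.sum_congr rfl fun l _ => ?_
    have h3 : ∑ m, wker ω N w (z l) * E⁻¹ l m * g.eval (z m)
        = wker ω N w (z l) * ∑ m, E⁻¹ l m * gZ m := by
      rw [Finset.mul_sum]
      exact Finset.sum_congr rfl fun m _ => by rw [hgZ]; ring
    rw [h3, mul_comm]
    congr 1
end

section
/- Let f be a monic polynomial of degree d ≥ 1 with simple (distinct) zeros z_1, …, z_d ∈ ℂ ∖ {0}, and let g be a complex polynomial of degree at most d. For every n ≥ deg(g), the squared distance dist²(g, 𝒫_n·f) := min over polynomials p of degree at most n of ‖g − p f‖²_ω equals \overline{g_Z} · E^{-1} · g_Z^t, where E is the d×d matrix with entries e_{l,m} = k_{n+d}(z_l, z_m), g_Z = (g(z_1), …, g(z_d)), and \overline{g_Z} is its entrywise complex conjugate. -/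
open Polynomial Finset

noncomputable def ipol (ω : ℕ → ℝ) (m : ℕ) (a b : Polynomial ℂ) : ℂ :=
  ∑ k ∈ Finset.range (m + 1), (starRingEnd ℂ) (a.coeff k) * b.coeff k * (ω k : ℂ)

noncomputable def kerpol (ω : ℕ → ℝ) (m : ℕ) (w : ℂ) : Polynomial ℂ :=
  ∑ k ∈ Finset.range (m + 1), Polynomial.C ((starRingEnd ℂ) w ^ k / (ω k : ℂ)) * Polynomial.X ^ k

lemma kerpol_coeff (ω : ℕ → ℝ) (m : ℕ) (w : ℂ) (k : ℕ) :
    (kerpol ω m w).coeff k = if k ≤ m then (starRingEnd ℂ) w ^ k / (ω k : ℂ) else 0 := by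
  simp only [kerpol, finset_sum_coeff, coeff_C_mul, coeff_X_pow, mul_ite, mul_one, mul_zero]
  rw [Finset.sum_ite_eq]
  simp [Finset.mem_range, Nat.lt_succ_iff]

lemma kerpol_natDegree_le (ω : ℕ → ℝ) (m : ℕ) (w : ℂ) : (kerpol ω m w).natDegree ≤ m := by
  apply natDegree_le_iff_coeff_eq_zero.2
  intro k hk
  rw [kerpol_coeff, if_neg (by omega)]

lemma kerpol_eval (ω : ℕ → ℝ) (m : ℕ) (w x : ℂ) :
    (kerpol ω m w).eval x = wker ω m x w := by
  simp only [kerpol, eval_finset_sum, eval_mul, eval_C, eval_pow, eval_X, wker]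
  exact Finset.sum_congr rfl fun k _ => by ring

lemma ipol_reproduce (ω : ℕ → ℝ) (m : ℕ) (hωpos : ∀ k, 0 < ω k) {b : Polynomial ℂ}
    (hb : b.natDegree ≤ m) (w : ℂ) : ipol ω m (kerpol ω m w) b = b.eval w := by
  rw [eval_eq_sum_range' (lt_of_le_of_lt hb (Nat.lt_succ_self m)), ipol]
  refine Finset.sum_congr rfl fun k hk => ?_
  rw [Finset.mem_range, Nat.lt_succ_iff] at hk
  rw [kerpol_coeff, if_pos hk, map_div₀, map_pow, Complex.conj_conj, Complex.conj_ofReal]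
  have h1 : (ω k : ℂ) ≠ 0 := Complex.ofReal_ne_zero.2 (hωpos k).ne'
  field_simp

lemma ipol_conj (ω : ℕ → ℝ) (m : ℕ) (a b : Polynomial ℂ) :
    (starRingEnd ℂ) (ipol ω m a b) = ipol ω m b a := by
  simp only [ipol, map_sum, map_mul, Complex.conj_conj, Complex.conj_ofReal]
  exact Finset.sum_congr rfl fun k _ => by ring

lemma wnormSq_eq (ω : ℕ → ℝ) (m : ℕ) {h : Polynomial ℂ} (hh : h.natDegree ≤ m) :
    (wnormSq ω h : ℂ) = ipol ω m h h := by
  have : wnormSq ω h = ∑ k ∈ Finset.range (m + 1), ‖h.coeff k‖ ^ 2 * ω k := by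
    rw [wnormSq]
    apply Finset.sum_subset
    · intro k hk; rw [Finset.mem_range] at *; omega
    · intro k _ hk
      rw [Finset.mem_range, Nat.lt_succ_iff, not_le] at hk
      simp [coeff_eq_zero_of_natDegree_lt hk]
  rw [this, ipol, Complex.ofReal_sum]
  refine Finset.sum_congr rfl fun k _ => ?_
  rw [Complex.ofReal_mul, Complex.ofReal_pow]
  rw [← Complex.mul_conj']
  ring

lemma wnormSq_nonneg (ω : ℕ → ℝ) (hωpos : ∀ k, 0 < ω k) (h : Polynomial ℂ) :
    0 ≤ wnormSq ω h := by
  exact Finset.sum_nonneg fun k _ => mul_nonneg (by positivity) (hωpos k).le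

lemma ipol_self_eq_zero (ω : ℕ → ℝ) (m : ℕ) (hωpos : ∀ k, 0 < ω k) {a : Polynomial ℂ}
    (ha : a.natDegree ≤ m) (h0 : ipol ω m a a = 0) : a = 0 := by
  have hw : wnormSq ω a = 0 := by
    have := wnormSq_eq ω m ha
    rw [h0] at this
    exact_mod_cast this
  by_contra hne
  have hmem : a.natDegree ∈ Finset.range (a.natDegree + 1) := by simp
  have hz := (Finset.sum_eq_zero_iff_of_nonneg
    (fun k _ => mul_nonneg (by positivity) (hωpos k).le)).1 hw _ hmem
  have hlc : a.coeff a.natDegree ≠ 0 := leadingCoeff_ne_zero.2 hne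
  have h2 := (mul_eq_zero.1 hz).resolve_right (hωpos _).ne'
  simp only [ne_eq, OfNat.ofNat_ne_zero, not_false_eq_true, pow_eq_zero_iff, norm_eq_zero] at h2
  exact hlc (by simpa using h2)

lemma ipol_add_left (ω : ℕ → ℝ) (m : ℕ) (a b c : Polynomial ℂ) :
    ipol ω m (a + b) c = ipol ω m a c + ipol ω m b c := by
  simp only [ipol, coeff_add, map_add, ← Finset.sum_add_distrib]
  exact Finset.sum_congr rfl fun k _ => by ring

lemma ipol_add_right (ω : ℕ → ℝ) (m : ℕ) (a b c : Polynomial ℂ) :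
    ipol ω m a (b + c) = ipol ω m a b + ipol ω m a c := by
  simp only [ipol, coeff_add, ← Finset.sum_add_distrib]
  exact Finset.sum_congr rfl fun k _ => by ring

lemma ipol_sum_smul_left (ω : ℕ → ℝ) (m : ℕ) {ι : Type*} (s : Finset ι)
    (c : ι → ℂ) (P : ι → Polynomial ℂ) (b : Polynomial ℂ) :
    ipol ω m (∑ l ∈ s, c l • P l) b = ∑ l ∈ s, (starRingEnd ℂ) (c l) * ipol ω m (P l) b := by
  simp only [ipol, finset_sum_coeff, coeff_smul, smul_eq_mul, map_sum, map_mul,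
    Finset.mul_sum, Finset.sum_mul]
  rw [Finset.sum_comm]
  exact Finset.sum_congr rfl fun l _ => Finset.sum_congr rfl fun k _ => by ring

lemma ipol_sum_smul_right (ω : ℕ → ℝ) (m : ℕ) {ι : Type*} (s : Finset ι)
    (c : ι → ℂ) (P : ι → Polynomial ℂ) (b : Polynomial ℂ) :
    ipol ω m b (∑ l ∈ s, c l • P l) = ∑ l ∈ s, c l * ipol ω m b (P l) := by
  simp only [ipol, finset_sum_coeff, coeff_smul, smul_eq_mul, Finset.mul_sum, Finset.sum_mul]
  rw [Finset.sum_comm]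
  exact Finset.sum_congr rfl fun l _ => Finset.sum_congr rfl fun k _ => by ring

theorem stmt1
    (ω : ℕ → ℝ) (hω0 : ω 0 = 1) (hωpos : ∀ k, 0 < ω k)
    (hωlim : Filter.Tendsto (fun k => ω k / ω (k + 1)) Filter.atTop (nhds 1))
    (d : ℕ) (hd : 0 < d) (z : Fin d → ℂ)
    (hzinj : Function.Injective z) (hz0 : ∀ i, z i ≠ 0)
    (f : Polynomial ℂ) (hf : f = ∏ i, (Polynomial.X - Polynomial.C (z i)))
    (g : Polynomial ℂ) (hgd : g.natDegree ≤ d)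
    (n : ℕ) (hn : g.natDegree ≤ n)
    (E : Matrix (Fin d) (Fin d) ℂ)
    (hE : ∀ l m, E l m = wker ω (n + d) (z l) (z m)) :
    ∃ D : ℝ,
      IsLeast {x : ℝ | ∃ p : Polynomial ℂ, p.natDegree ≤ n ∧
        x = wnormSq ω (g - p * f)} D ∧
      (D : ℂ) = ∑ l, ∑ m,
        (starRingEnd ℂ) (g.eval (z l)) * E⁻¹ l m * g.eval (z m) := by
  classical
  set N := n + d with hN
  have hfmonic : f.Monic := by
    rw [hf]; exact monic_prod_of_monic _ _ fun i _ => monic_X_sub_C (z i)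
  have hfne : f ≠ 0 := hfmonic.ne_zero
  have hfdeg : f.natDegree = d := by
    rw [hf, natDegree_prod _ _ fun i _ => X_sub_C_ne_zero (z i)]
    simp [natDegree_X_sub_C]
  have hfeval : ∀ i, f.eval (z i) = 0 := by
    intro i
    rw [hf, eval_prod]
    exact Finset.prod_eq_zero (Finset.mem_univ i) (by simp)
  set gZ : Fin d → ℂ := fun l => g.eval (z l) with hgZ
  have hgdm : g.natDegree ≤ N := le_trans hgd (by omega)
  have hEgram : ∀ l j, ipol ω N (kerpol ω N (z l)) (kerpol ω N (z j)) = E l j := by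
    intro l j
    rw [ipol_reproduce ω N hωpos (kerpol_natDegree_le ω N _), kerpol_eval, hE]
  -- invertibility of E
  have hEkey : ∀ c : Fin d → ℂ, E.mulVec c = 0 → c = 0 := by
    intro c hc
    set K0 := ∑ j, c j • kerpol ω N (z j) with hK0
    have hK0deg : K0.natDegree ≤ N :=
      natDegree_sum_le_of_forall_le _ _ fun j _ =>
        le_trans (natDegree_smul_le _ _) (kerpol_natDegree_le ω N _)
    have hK0ip : ∀ l, ipol ω N (kerpol ω N (z l)) K0 = 0 := by
      intro l
      rw [hK0, ipol_sum_smul_right]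
      have h2 : ∀ j, c j * ipol ω N (kerpol ω N (z l)) (kerpol ω N (z j)) = E l j * c j :=
        fun j => by rw [hEgram]; ring
      rw [Finset.sum_congr rfl fun j _ => h2 j]
      have := congrFun hc l
      simpa [Matrix.mulVec, dotProduct] using this
    have hK0self : ipol ω N K0 K0 = 0 := by
      have h1 := ipol_sum_smul_left ω N Finset.univ c (fun j => kerpol ω N (z j)) K0
      rw [← hK0] at h1
      rw [h1]
      simp [hK0ip]
    have hK0z : K0 = 0 := ipol_self_eq_zero ω N hωpos hK0deg hK0self
    have hcoef : ∀ k : Fin d, ∑ j, c j * (starRingEnd ℂ) (z j) ^ (k : ℕ) = 0 := by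
      intro k
      have hkm : (k : ℕ) ≤ N := by have := k.isLt; omega
      have h1 : K0.coeff k = ∑ j, c j * ((starRingEnd ℂ) (z j) ^ (k : ℕ) / (ω k : ℂ)) := by
        rw [hK0, finset_sum_coeff]
        exact Finset.sum_congr rfl fun j _ => by
          rw [coeff_smul, kerpol_coeff, if_pos hkm, smul_eq_mul]
      rw [hK0z] at h1
      have hωne : ((ω (k : ℕ) : ℝ) : ℂ) ≠ 0 := Complex.ofReal_ne_zero.2 (hωpos _).ne'
      have h2 : (∑ j, c j * ((starRingEnd ℂ) (z j) ^ (k : ℕ) / (ω k : ℂ))) * (ω k : ℂ) = 0 := by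
        rw [← h1]; simp
      rw [Finset.sum_mul] at h2
      rw [← h2]
      exact Finset.sum_congr rfl fun j _ => by field_simp
    set A := Matrix.vandermonde (fun j => (starRingEnd ℂ) (z j)) with hA
    have hAdet : IsUnit A.det := by
      rw [Matrix.det_vandermonde, isUnit_iff_ne_zero]
      apply Finset.prod_ne_zero_iff.2
      intro i _
      apply Finset.prod_ne_zero_iff.2
      intro j hj
      rw [Finset.mem_Ioi] at hj
      have : z j ≠ z i := fun h => absurd (hzinj h) (ne_of_gt hj)
      simpa [sub_eq_zero] using fun h => this (starRingEnd ℂ |>.injective h)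
    have hvec : Matrix.vecMul c A = 0 := by
      funext k
      have := hcoef k
      simpa [Matrix.vecMul, dotProduct, hA, Matrix.vandermonde] using this
    have : c = Matrix.vecMul c (A * A⁻¹) := by
      rw [Matrix.mul_nonsing_inv _ hAdet, Matrix.vecMul_one]
    rw [← Matrix.vecMul_vecMul, hvec] at this
    simpa using this
  have hEunit : IsUnit E := by
    rw [← Matrix.mulVec_injective_iff_isUnit]
    intro c₁ c₂ h
    have := hEkey (c₁ - c₂) (by rw [Matrix.mulVec_sub, h, sub_self])
    exact sub_eq_zero.1 this
  have hEdet : IsUnit E.det := (Matrix.isUnit_iff_isUnit_det E).1 hEunit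
  have hEEinv : E * E⁻¹ = 1 := Matrix.mul_nonsing_inv E hEdet
  set c : Fin d → ℂ := E⁻¹.mulVec gZ with hc
  have hEc : E.mulVec c = gZ := by
    rw [hc, Matrix.mulVec_mulVec, hEEinv, Matrix.one_mulVec]
  set K := ∑ l, c l • kerpol ω N (z l) with hK
  have hKdeg : K.natDegree ≤ N :=
    natDegree_sum_le_of_forall_le _ _ fun j _ =>
      le_trans (natDegree_smul_le _ _) (kerpol_natDegree_le ω N _)
  have hKeval : ∀ j, K.eval (z j) = gZ j := by
    intro j
    rw [hK, eval_finset_sum]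
    have h2 : ∀ l, (c l • kerpol ω N (z l)).eval (z j) = E j l * c l := fun l => by
      rw [eval_smul, kerpol_eval, smul_eq_mul, hE]; ring
    rw [Finset.sum_congr rfl fun l _ => h2 l]
    have := congrFun hEc j
    simpa [Matrix.mulVec, dotProduct] using this
  have hKorth : ∀ q : Polynomial ℂ, q.natDegree ≤ n → ipol ω N K (q * f) = 0 := by
    intro q hq
    have hqf : (q * f).natDegree ≤ N :=
      le_trans (natDegree_mul_le) (by rw [hfdeg]; omega)
    have h1 := ipol_sum_smul_left ω N Finset.univ c (fun l => kerpol ω N (z l)) (q * f)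
    rw [← hK] at h1
    rw [h1]
    apply Finset.sum_eq_zero
    intro l _
    rw [ipol_reproduce ω N hωpos hqf, eval_mul, hfeval, mul_zero, mul_zero]
  -- divisibility
  have hdvd : f ∣ (g - K) := by
    rw [hf]
    apply Finset.prod_dvd_of_coprime
    · exact (Polynomial.pairwise_coprime_X_sub_C hzinj).set_pairwise _
    · intro i _
      rw [dvd_iff_isRoot]
      simp [IsRoot, hKeval i, hgZ]
  obtain ⟨p₀, hp₀⟩ := hdvd
  have hgK : g - p₀ * f = K := by linear_combination hp₀
  have hp₀n : p₀.natDegree ≤ n := by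
    by_cases h0 : p₀ = 0
    · simp [h0]
    · have hnz : g - K ≠ 0 := by rw [hp₀]; exact mul_ne_zero hfne h0
      have hdd : (g - K).natDegree = d + p₀.natDegree := by
        rw [hp₀, natDegree_mul hfne h0, hfdeg]
      have hle : (g - K).natDegree ≤ N :=
        le_trans (natDegree_sub_le _ _) (max_le hgdm hKdeg)
      omega
  refine ⟨wnormSq ω K, ⟨⟨p₀, hp₀n, by rw [hgK]⟩, ?_⟩, ?_⟩
  · rintro x ⟨p, hpn, rfl⟩
    have hgp : g - p * f = K + (p₀ - p) * f := by linear_combination hp₀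
    have hqn : (p₀ - p).natDegree ≤ n := le_trans (natDegree_sub_le _ _) (max_le hp₀n hpn)
    have hedeg : ((p₀ - p) * f).natDegree ≤ N :=
      le_trans natDegree_mul_le (by rw [hfdeg]; omega)
    have horth : ipol ω N K ((p₀ - p) * f) = 0 := hKorth _ hqn
    have horth' : ipol ω N ((p₀ - p) * f) K = 0 := by
      rw [← ipol_conj ω N K, horth, map_zero]
    have hgpdeg : (g - p * f).natDegree ≤ N := by
      rw [hgp]; exact le_trans (natDegree_add_le _ _) (max_le hKdeg hedeg)
    have hsum : (wnormSq ω (g - p * f) : ℂ)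
        = (wnormSq ω K : ℂ) + (wnormSq ω ((p₀ - p) * f) : ℂ) := by
      rw [wnormSq_eq ω N hgpdeg, hgp, ipol_add_left, ipol_add_right, ipol_add_right,
        horth, horth', wnormSq_eq ω N hKdeg, wnormSq_eq ω N hedeg]
      ring
    have hre : wnormSq ω (g - p * f) = wnormSq ω K + wnormSq ω ((p₀ - p) * f) := by
      exact_mod_cast hsum
    rw [hre]
    have := wnormSq_nonneg ω hωpos ((p₀ - p) * f)
    linarith
  · have hval : (wnormSq ω K : ℂ) = ∑ l, (starRingEnd ℂ) (c l) * gZ l := by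
      rw [wnormSq_eq ω N hKdeg]
      have h1 := ipol_sum_smul_left ω N Finset.univ c (fun l => kerpol ω N (z l)) K
      rw [← hK] at h1
      rw [h1]
      exact Finset.sum_congr rfl fun l _ => by
        rw [ipol_reproduce ω N hωpos hKdeg, hKeval l]
    have hEinvherm : ∀ l j, (starRingEnd ℂ) (E⁻¹ l j) = E⁻¹ j l := by
      have hEH : E.conjTranspose = E := by
        ext l j
        rw [Matrix.conjTranspose_apply, hE, hE, ← starRingEnd_apply]
        simp only [wker, map_sum]
        refine Finset.sum_congr rfl fun k _ => ?_
        rw [map_div₀, map_mul, map_pow, map_pow, Complex.conj_conj, Complex.conj_ofReal]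
        ring
      intro l j
      have h := Matrix.conjTranspose_nonsing_inv E
      rw [hEH] at h
      have := congrFun (congrFun h j) l
      rw [Matrix.conjTranspose_apply] at this
      exact this
    rw [hval]
    have hcl : ∀ l, (starRingEnd ℂ) (c l) = ∑ j, E⁻¹ j l * (starRingEnd ℂ) (gZ j) := by
      intro l
      rw [hc]
      simp only [Matrix.mulVec, dotProduct, map_sum, map_mul]
      exact Finset.sum_congr rfl fun j _ => by rw [hEinvherm]
    rw [Finset.sum_congr rfl fun l (_ : l ∈ Finset.univ) => by rw [hcl l, Finset.sum_mul]]
    rw [Finset.sum_comm]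
    refine Finset.sum_congr rfl fun j _ => Finset.sum_congr rfl fun l _ => ?_
    simp only [hgZ]
    ring
end

section
/- Let f be a monic polynomial of degree d ≥ 1 with simple (distinct) zeros z_1, …, z_d ∈ ℂ ∖ {0}, let n ∈ ℕ, and let p_n be the n-th optimal polynomial approximant to 1/f in H²_ω. Let E be the d×d matrix with entries e_{l,m} = k_{n+d}(z_l, z_m) (which is invertible), and set (A_{1,n}, …, A_{d,n})^t = E^{-1} · (1, …, 1)^t. Then for every k with 0 ≤ k ≤ n + d, the coefficient of z^k in the polynomial 1 − p_n f equals (1/ω_k) · ∑_{i=1}^d A_{i,n} \overline{z_i}^k. -/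
open Polynomial Finset

/-- weighted truncated inner product -/
noncomputable def winner (ω : ℕ → ℝ) (N : ℕ) (g h : Polynomial ℂ) : ℂ :=
  ∑ k ∈ Finset.range N, g.coeff k * (starRingEnd ℂ) (h.coeff k) * (ω k : ℂ)

lemma wnormSq_eq_sum_range (ω : ℕ → ℝ) (g : Polynomial ℂ) {N : ℕ} (h : g.natDegree < N) :
    wnormSq ω g = ∑ k ∈ Finset.range N, ‖g.coeff k‖ ^ 2 * ω k := by
  apply Finset.sum_subset (Finset.range_subset_range.2 h)
  intro k _ hk
  have hk' : g.natDegree < k := by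
    have : ¬ k < g.natDegree + 1 := fun h' => hk (Finset.mem_range.mpr h')
    omega
  simp [Polynomial.coeff_eq_zero_of_natDegree_lt hk']

lemma expand_term (a b t : ℂ) (w : ℝ) :
    ‖a - t*b‖^2 * w
      = ‖a‖^2*w - 2*((starRingEnd ℂ t) * (a * (starRingEnd ℂ) b * (w:ℂ))).re
        + ‖t‖^2 * (‖b‖^2 * w) := by
  simp only [Complex.sq_norm, Complex.normSq_apply, Complex.mul_re,
    Complex.mul_im, Complex.sub_re, Complex.sub_im, Complex.conj_re, Complex.conj_im,
    Complex.ofReal_re, Complex.ofReal_im]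
  ring

lemma vand_zero {d : ℕ} (w : Fin d → ℂ) (hw : Function.Injective w) (c : Fin d → ℂ)
    (h : ∀ k : Fin d, ∑ m, c m * w m ^ (k:ℕ) = 0) : c = 0 := by
  by_contra hc
  have hM : (Matrix.of fun (k m : Fin d) => w m ^ (k:ℕ)).mulVec c = 0 := by
    funext k
    simpa [Matrix.mulVec, dotProduct, mul_comm] using h k
  have hdet := Matrix.exists_mulVec_eq_zero_iff.mp ⟨c, hc, hM⟩
  have heq : (Matrix.of fun (k m : Fin d) => w m ^ (k:ℕ)) = (Matrix.vandermonde w).transpose := by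
    ext k m; simp [Matrix.vandermonde]
  rw [heq, Matrix.det_transpose, Matrix.det_vandermonde] at hdet
  have : ∀ i : Fin d, ∀ j ∈ Finset.Ioi i, w j - w i ≠ 0 := by
    intro i j hj
    have : i ≠ j := (Finset.mem_Ioi.mp hj).ne
    exact sub_ne_zero.2 fun hww => this (hw hww.symm)
  exact (Finset.prod_ne_zero_iff.2 fun i _ =>
    Finset.prod_ne_zero_iff.2 fun j hj => this i j hj) hdet

theorem stmt3
    (ω : ℕ → ℝ) (hω0 : ω 0 = 1) (hωpos : ∀ k, 0 < ω k)
    (hωlim : Filter.Tendsto (fun k => ω k / ω (k + 1)) Filter.atTop (nhds 1))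
    (d : ℕ) (hd : 0 < d) (z : Fin d → ℂ)
    (hzinj : Function.Injective z) (hz0 : ∀ i, z i ≠ 0)
    (f : Polynomial ℂ) (hf : f = ∏ i, (Polynomial.X - Polynomial.C (z i)))
    (n : ℕ) (p : Polynomial ℂ) (hpdeg : p.natDegree ≤ n)
    (hpopt : ∀ q : Polynomial ℂ, q.natDegree ≤ n →
      wnormSq ω (1 - p * f) ≤ wnormSq ω (1 - q * f))
    (E : Matrix (Fin d) (Fin d) ℂ)
    (hE : ∀ l m, E l m = wker ω (n + d) (z l) (z m))
    (A : Fin d → ℂ) (hA : A = E⁻¹.mulVec (fun _ => 1)) :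
    IsUnit E.det ∧
    ∀ k : ℕ, k ≤ n + d →
      ((1 : Polynomial ℂ) - p * f).coeff k
        = (1 / (ω k : ℂ)) * ∑ i, A i * (starRingEnd ℂ (z i)) ^ k := by
  classical
  have hωne : ∀ k, (ω k : ℂ) ≠ 0 := fun k => Complex.ofReal_ne_zero.mpr (ne_of_gt (hωpos k))
  -- degree facts
  have hfmonic : f.Monic := by
    rw [hf]; exact monic_prod_of_monic _ _ (fun i _ => monic_X_sub_C _)
  have hfdeg : f.natDegree = d := by
    rw [hf, Polynomial.natDegree_prod _ _ (fun i _ => X_sub_C_ne_zero (z i))]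
    simp
  have hqf : ∀ q : Polynomial ℂ, q.natDegree ≤ n → (q * f).natDegree ≤ n + d := by
    intro q hq
    exact le_trans (Polynomial.natDegree_mul_le) (by omega)
  have hqfdeg : ∀ q : Polynomial ℂ, q.natDegree ≤ n →
      ((1 : Polynomial ℂ) - q * f).natDegree < n + d + 1 := by
    intro q hq
    have h2 := Polynomial.natDegree_sub_le (1 : Polynomial ℂ) (q * f)
    have h3 := hqf q hq
    simp only [Polynomial.natDegree_one] at h2
    omega
  have hfeval : ∀ i, f.eval (z i) = 0 := by
    intro i
    rw [hf, Polynomial.eval_prod]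
    exact Finset.prod_eq_zero (Finset.mem_univ i) (by simp)
  set r : Polynomial ℂ := 1 - p * f with hr
  have hSnonneg : ∀ u : Polynomial ℂ, 0 ≤ ∑ k ∈ range (n+d+1), ‖u.coeff k‖^2 * ω k :=
    fun u => Finset.sum_nonneg fun k _ => mul_nonneg (sq_nonneg _) (hωpos k).le
  -- Step 1: orthogonality from optimality
  have horth : ∀ q : Polynomial ℂ, q.natDegree ≤ n → winner ω (n+d+1) r (q * f) = 0 := by
    intro q hq
    set u : Polynomial ℂ := q * f with hu
    set s : ℂ := winner ω (n+d+1) r u with hs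
    set Su : ℝ := ∑ k ∈ range (n+d+1), ‖u.coeff k‖^2 * ω k with hSu
    have key : ∀ t : ℂ, 0 ≤ -(2*((starRingEnd ℂ t) * s).re) + ‖t‖^2 * Su := by
      intro t
      have hdeg' : (p + Polynomial.C t * q).natDegree ≤ n :=
        le_trans (Polynomial.natDegree_add_le _ _)
          (max_le hpdeg (le_trans (Polynomial.natDegree_C_mul_le _ _) hq))
      have h1 := hpopt _ hdeg'
      have heq : (1 : Polynomial ℂ) - (p + Polynomial.C t * q) * f
          = r - Polynomial.C t * u := by rw [hr, hu]; ring
      rw [heq, wnormSq_eq_sum_range ω r (hqfdeg p hpdeg),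
        wnormSq_eq_sum_range ω _ (heq ▸ hqfdeg _ hdeg')] at h1
      have hexp : ∑ k ∈ range (n+d+1), ‖(r - Polynomial.C t * u).coeff k‖^2 * ω k
          = (∑ k ∈ range (n+d+1), ‖r.coeff k‖^2 * ω k)
            - 2*((starRingEnd ℂ t) * s).re + ‖t‖^2 * Su := by
        have e1 : ∀ k ∈ range (n+d+1), ‖(r - Polynomial.C t * u).coeff k‖^2 * ω k
            = ‖r.coeff k‖^2 * ω k
              - 2*((starRingEnd ℂ t) * (r.coeff k * (starRingEnd ℂ) (u.coeff k) * (ω k : ℂ))).re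
              + ‖t‖^2 * (‖u.coeff k‖^2 * ω k) := by
          intro k _
          rw [Polynomial.coeff_sub, Polynomial.coeff_C_mul]
          exact expand_term _ _ _ _
        rw [Finset.sum_congr rfl e1, Finset.sum_add_distrib, Finset.sum_sub_distrib]
        congr 2
        · rw [← Finset.mul_sum, ← Complex.re_sum, ← Finset.mul_sum]
          rfl
        · exact (Finset.mul_sum _ _ _).symm
      rw [hexp] at h1
      linarith
    by_contra hsne
    have hnspos : 0 < Complex.normSq s := Complex.normSq_pos.mpr hsne
    have hSu0 : 0 ≤ Su := hSnonneg u
    set ε : ℝ := 1/(Su + 1) with hε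
    have hεpos : 0 < ε := by positivity
    have hεSu : ε * Su < 1 := by
      rw [hε, div_mul_eq_mul_div, one_mul, div_lt_one (by linarith)]
      linarith
    have hkey := key ((ε:ℂ) * s)
    have h2 : ((starRingEnd ℂ) ((ε:ℂ)*s) * s) = ((ε * Complex.normSq s : ℝ) : ℂ) := by
      rw [map_mul, Complex.conj_ofReal, mul_assoc, mul_comm ((starRingEnd ℂ) s) s,
        Complex.mul_conj]
      push_cast
      ring
    have h3 : ‖(ε:ℂ)*s‖^2 = ε^2 * Complex.normSq s := by
      rw [norm_mul, mul_pow, Complex.norm_real, Real.norm_eq_abs, sq_abs,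
        Complex.sq_norm]
    rw [h2, h3] at hkey
    simp only [Complex.ofReal_re] at hkey
    nlinarith [mul_pos hεpos hnspos]
  -- Step 2: E is invertible
  have hdetE : IsUnit E.det := by
    rw [isUnit_iff_ne_zero]
    intro hdet0
    obtain ⟨c, hc, hmv⟩ := (Matrix.exists_mulVec_eq_zero_iff).mpr hdet0
    set S : ℕ → ℂ := fun k => ∑ m, c m * (starRingEnd ℂ (z m))^k with hSdef
    have hT : (0:ℂ) = ∑ k ∈ range (n+d+1), (starRingEnd ℂ) (S k) * S k / (ω k : ℂ) := by
      have h0 : ∑ l, (starRingEnd ℂ) (c l) * (E.mulVec c l) = 0 := by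
        simp [hmv]
      rw [← h0]
      calc ∑ l, (starRingEnd ℂ) (c l) * (E.mulVec c l)
          = ∑ l, ∑ m, ∑ k ∈ range (n+d+1),
              (starRingEnd ℂ) (c l) * c m * ((z l)^k * (starRingEnd ℂ (z m))^k / (ω k : ℂ)) := by
            refine Finset.sum_congr rfl (fun l _ => ?_)
            rw [Matrix.mulVec, dotProduct, Finset.mul_sum]
            refine Finset.sum_congr rfl (fun m _ => ?_)
            rw [hE, wker, Finset.sum_mul, Finset.mul_sum]
            refine Finset.sum_congr rfl (fun k _ => ?_)
            ring
        _ = ∑ k ∈ range (n+d+1), ∑ l, ∑ m,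
              (starRingEnd ℂ) (c l) * c m * ((z l)^k * (starRingEnd ℂ (z m))^k / (ω k : ℂ)) := by
            have swap1 : (∑ l, ∑ m, ∑ k ∈ range (n+d+1),
                (starRingEnd ℂ) (c l) * c m * ((z l)^k * (starRingEnd ℂ (z m))^k / (ω k : ℂ)))
                = ∑ l, ∑ k ∈ range (n+d+1), ∑ m,
                (starRingEnd ℂ) (c l) * c m * ((z l)^k * (starRingEnd ℂ (z m))^k / (ω k : ℂ)) :=
              Finset.sum_congr rfl (fun l _ => Finset.sum_comm)
            rw [swap1]
            exact Finset.sum_comm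
        _ = ∑ k ∈ range (n+d+1), (starRingEnd ℂ) (S k) * S k / (ω k : ℂ) := by
            refine Finset.sum_congr rfl (fun k _ => ?_)
            rw [hSdef]
            simp only [map_sum, map_mul, map_pow, Complex.conj_conj]
            rw [Finset.sum_mul_sum, Finset.sum_div]
            refine Finset.sum_congr rfl (fun l _ => ?_)
            rw [Finset.sum_div]
            refine Finset.sum_congr rfl (fun m _ => ?_)
            ring
    have hterm : ∀ k, (starRingEnd ℂ) (S k) * S k / (ω k : ℂ)
        = ((Complex.normSq (S k) / ω k : ℝ) : ℂ) := by
      intro k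
      rw [mul_comm, Complex.mul_conj]
      push_cast
      ring
    have hre : (0:ℝ) = ∑ k ∈ range (n+d+1), Complex.normSq (S k) / ω k := by
      have := hT
      simp only [hterm] at this
      rw [← Complex.ofReal_sum] at this
      exact_mod_cast this
    have hSzero : ∀ k ∈ range (n+d+1), S k = 0 := by
      intro k hk
      have hall := (Finset.sum_eq_zero_iff_of_nonneg
        (fun k _ => div_nonneg (Complex.normSq_nonneg _) (hωpos k).le)).mp hre.symm
      have := hall k hk
      have hnet := (div_eq_zero_iff.mp this).resolve_right (ne_of_gt (hωpos k))
      exact Complex.normSq_eq_zero.mp hnet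
    have hczero : c = 0 := by
      apply vand_zero (fun m => (starRingEnd ℂ) (z m))
        (fun a b hab => hzinj ((starRingEnd ℂ).injective hab))
      intro k
      have hkmem : (k : ℕ) ∈ range (n+d+1) := Finset.mem_range.mpr (by omega)
      exact hSzero k hkmem
    exact hc hczero
  refine ⟨hdetE, ?_⟩
  -- Step 3: the kernel combination and its properties
  set rhat : Polynomial ℂ :=
    ∑ i, Polynomial.C (A i) *
      ∑ k ∈ range (n+d+1), Polynomial.C ((starRingEnd ℂ (z i))^k / (ω k : ℂ)) * X^k
    with hrhat
  have hrhatcoeff : ∀ k ∈ range (n+d+1),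
      rhat.coeff k = ∑ i, A i * ((starRingEnd ℂ (z i))^k / (ω k : ℂ)) := by
    intro k hk
    rw [hrhat, Polynomial.finset_sum_coeff]
    refine Finset.sum_congr rfl (fun i _ => ?_)
    rw [Polynomial.coeff_C_mul, Polynomial.finset_sum_coeff]
    congr 1
    simp only [Polynomial.coeff_C_mul, Polynomial.coeff_X_pow, mul_ite, mul_one, mul_zero]
    rw [Finset.sum_ite_eq (range (n+d+1)) k]
    simp [Finset.mem_range.mp hk]
  have hrhatdeg : rhat.natDegree < n + d + 1 := by
    have h1 : rhat.natDegree ≤ n + d := by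
      rw [hrhat]
      apply Polynomial.natDegree_sum_le_of_forall_le
      intro i _
      refine le_trans (Polynomial.natDegree_C_mul_le _ _) ?_
      apply Polynomial.natDegree_sum_le_of_forall_le
      intro k hk
      refine le_trans (Polynomial.natDegree_C_mul_le _ _) ?_
      rw [Polynomial.natDegree_X_pow]
      exact Nat.lt_succ_iff.mp (Finset.mem_range.mp hk)
    omega
  have hEA : E.mulVec A = fun _ => 1 := by
    rw [hA, Matrix.mulVec_mulVec, Matrix.mul_nonsing_inv E hdetE, Matrix.one_mulVec]
  have hrhat_eval : ∀ l, rhat.eval (z l) = 1 := by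
    intro l
    have h1 : rhat.eval (z l) = ∑ i, E l i * A i := by
      rw [hrhat, Polynomial.eval_finset_sum]
      refine Finset.sum_congr rfl (fun i _ => ?_)
      rw [Polynomial.eval_mul, Polynomial.eval_C, Polynomial.eval_finset_sum, hE, wker,
        mul_comm (A i)]
      congr 1
      refine Finset.sum_congr rfl (fun k _ => ?_)
      rw [Polynomial.eval_mul, Polynomial.eval_C, Polynomial.eval_pow, Polynomial.eval_X]
      ring
    rw [h1]
    have h2 := congrFun hEA l
    simpa [Matrix.mulVec, dotProduct] using h2
  have horth_rhat : ∀ q : Polynomial ℂ, q.natDegree ≤ n →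
      winner ω (n+d+1) rhat (q * f) = 0 := by
    intro q hq
    have hudeg : (q * f).natDegree < n + d + 1 := by have := hqf q hq; omega
    have hueval : ∀ i, (q * f).eval (z i) = 0 := fun i => by
      rw [Polynomial.eval_mul, hfeval i, mul_zero]
    rw [winner]
    calc ∑ k ∈ range (n+d+1), rhat.coeff k * (starRingEnd ℂ) ((q*f).coeff k) * (ω k : ℂ)
        = ∑ k ∈ range (n+d+1), ∑ i,
            A i * ((starRingEnd ℂ (z i))^k * (starRingEnd ℂ) ((q*f).coeff k)) := by
          refine Finset.sum_congr rfl (fun k hk => ?_)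
          rw [hrhatcoeff k hk, Finset.sum_mul, Finset.sum_mul]
          refine Finset.sum_congr rfl (fun i _ => ?_)
          have hω := hωne k
          field_simp
      _ = ∑ i, A i * (starRingEnd ℂ) ((q*f).eval (z i)) := by
          rw [Finset.sum_comm]
          refine Finset.sum_congr rfl (fun i _ => ?_)
          rw [Polynomial.eval_eq_sum_range' hudeg, map_sum, Finset.mul_sum]
          refine Finset.sum_congr rfl (fun k _ => ?_)
          rw [map_mul, map_pow]
          ring
      _ = 0 := by simp [hueval]
  -- Step 4: difference vanishes
  have hcoeffzero : ∀ k ∈ range (n+d+1), (r - rhat).coeff k = 0 := by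
    have hsub : ∀ q : Polynomial ℂ, q.natDegree ≤ n →
        winner ω (n+d+1) (r - rhat) (q * f) = 0 := by
      intro q hq
      have h1 : winner ω (n+d+1) (r - rhat) (q*f)
          = winner ω (n+d+1) r (q*f) - winner ω (n+d+1) rhat (q*f) := by
        simp [winner, Polynomial.coeff_sub, sub_mul, Finset.sum_sub_distrib]
      rw [h1, horth q hq, horth_rhat q hq, sub_zero]
    have hroot : ∀ l, (r - rhat).eval (z l) = 0 := by
      intro l
      rw [Polynomial.eval_sub, hrhat_eval l, hr]
      simp [hfeval l]
    have hdvd : f ∣ (r - rhat) := by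
      rw [hf]
      apply Finset.prod_dvd_of_coprime
      · exact ((Polynomial.pairwise_coprime_X_sub_C hzinj).set_pairwise _)
      · intro i _
        rw [Polynomial.dvd_iff_isRoot]
        exact hroot i
    obtain ⟨g, hg⟩ := hdvd
    have hgdeg : g.natDegree ≤ n := by
      by_cases hg0 : g = 0
      · simp [hg0]
      · have hfne : f ≠ 0 := hfmonic.ne_zero
        have hrdeg : r.natDegree < n + d + 1 := by
          have h' := hqfdeg p hpdeg; rw [← hr] at h'; exact h'
        have hsdeg : (r - rhat).natDegree ≤ n + d :=
          le_trans (Polynomial.natDegree_sub_le _ _) (max_le (by omega) (by omega))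
        rw [hg, Polynomial.natDegree_mul hfne hg0, hfdeg] at hsdeg
        omega
    have hgf : g * f = r - rhat := by rw [mul_comm, ← hg]
    have h0 : winner ω (n+d+1) (r - rhat) (r - rhat) = 0 := by
      have h2 := hsub g hgdeg
      rwa [hgf] at h2
    have hterm : ∀ k, (r - rhat).coeff k * (starRingEnd ℂ) ((r - rhat).coeff k) * (ω k : ℂ)
        = ((Complex.normSq ((r - rhat).coeff k) * ω k : ℝ) : ℂ) := fun k => by
      rw [Complex.mul_conj]; push_cast; ring
    have hre : (0:ℝ) = ∑ k ∈ range (n+d+1), Complex.normSq ((r - rhat).coeff k) * ω k := by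
      have h3 := h0
      rw [winner] at h3
      simp only [hterm] at h3
      rw [← Complex.ofReal_sum] at h3
      exact_mod_cast h3.symm
    intro k hk
    have hall := (Finset.sum_eq_zero_iff_of_nonneg
      (fun k _ => mul_nonneg (Complex.normSq_nonneg _) (hωpos k).le)).mp hre.symm
    have h4 := hall k hk
    have h5 := (mul_eq_zero.mp h4).resolve_right (ne_of_gt (hωpos k))
    exact Complex.normSq_eq_zero.mp h5
  -- conclude
  intro k hk
  have h1 := hcoeffzero k (Finset.mem_range.mpr (by omega))
  rw [Polynomial.coeff_sub, sub_eq_zero] at h1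
  rw [h1, hrhatcoeff k (Finset.mem_range.mpr (by omega)), Finset.mul_sum]
  exact Finset.sum_congr rfl (fun i _ => by ring)
end

section
/- Let f be a monic polynomial of degree d ≥ 1 with simple (distinct) zeros z_1, …, z_d ∈ ℂ ∖ {0}, let n ∈ ℕ, and let p_n be the n-th optimal polynomial approximant to 1/f in H²_ω. Let E be the d×d matrix with entries e_{l,m} = k_{n+d}(z_l, z_m), and set (A_{1,n}, …, A_{d,n})^t = E^{-1} · (1, …, 1)^t. Then ‖1 − p_n f‖²_ω = ∑_{i=1}^d A_{i,n} = (1, …, 1) · E^{-1} · (1, …, 1)^t; in particular ∑_{i=1}^d A_{i,n} is a real number lying in the interval [0, 1]. -/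
namespace Stmt4Aux

open Polynomial Finset

/-- weighted inner product on `Fin N → ℂ` -/
noncomputable def ip (ω : ℕ → ℝ) (N : ℕ) (u v : Fin N → ℂ) : ℂ :=
  ∑ k, u k * (starRingEnd ℂ) (v k) * ((ω k : ℝ) : ℂ)

/-- coefficient vector of a polynomial -/
def vecOf (N : ℕ) (g : Polynomial ℂ) : Fin N → ℂ := fun k => g.coeff k

/-- kernel vector -/
noncomputable def kervec (ω : ℕ → ℝ) (N : ℕ) (w : ℂ) : Fin N → ℂ :=
  fun k => (starRingEnd ℂ w) ^ (k : ℕ) / ((ω k : ℝ) : ℂ)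

variable {ω : ℕ → ℝ} {N : ℕ}

lemma ip_self (v : Fin N → ℂ) :
    ip ω N v v = (((∑ k, ‖v k‖ ^ 2 * ω k : ℝ) : ℝ) : ℂ) := by
  rw [ip]
  push_cast
  refine Finset.sum_congr rfl fun k _ => ?_
  rw [Complex.mul_conj]
  norm_cast
  rw [Complex.normSq_eq_norm_sq]

lemma ip_self_nonneg (hω : ∀ k, 0 < ω k) (v : Fin N → ℂ) :
    0 ≤ ∑ k, ‖v k‖ ^ 2 * ω k :=
  Finset.sum_nonneg fun k _ => mul_nonneg (by positivity) (hω k).le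

lemma ip_self_eq_zero (hω : ∀ k, 0 < ω k) {v : Fin N → ℂ}
    (h : ip ω N v v = 0) : v = 0 := by
  rw [ip_self] at h
  norm_cast at h
  have hnn : ∀ k ∈ (Finset.univ : Finset (Fin N)), 0 ≤ ‖v k‖ ^ 2 * ω k :=
    fun k _ => mul_nonneg (sq_nonneg _) (hω k).le
  funext k
  have h2 := (Finset.sum_eq_zero_iff_of_nonneg hnn).mp h k (Finset.mem_univ k)
  have hk : ‖v k‖ ^ 2 = 0 := by
    rcases mul_eq_zero.mp h2 with h' | h'
    · exact h'
    · exact absurd h' (hω k).ne'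
  simpa using pow_eq_zero_iff (n := 2) (by norm_num) |>.mp hk

lemma ip_conj (u v : Fin N → ℂ) :
    ip ω N u v = (starRingEnd ℂ) (ip ω N v u) := by
  rw [ip, ip, map_sum]
  refine Finset.sum_congr rfl fun k _ => ?_
  simp only [map_mul, Complex.conj_conj, Complex.conj_ofReal]
  ring

lemma ip_sum_left {ι : Type*} (s : Finset ι) (u : ι → Fin N → ℂ) (w : Fin N → ℂ) :
    ip ω N (∑ i ∈ s, u i) w = ∑ i ∈ s, ip ω N (u i) w := by
  simp only [ip, Finset.sum_apply, Finset.sum_mul]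
  exact Finset.sum_comm

lemma ip_smul_left (c : ℂ) (u w : Fin N → ℂ) :
    ip ω N (c • u) w = c * ip ω N u w := by
  simp only [ip, Pi.smul_apply, smul_eq_mul, Finset.mul_sum]
  exact Finset.sum_congr rfl fun k _ => by ring

lemma ip_add_left (u v w : Fin N → ℂ) :
    ip ω N (u + v) w = ip ω N u w + ip ω N v w := by
  simp only [ip, Pi.add_apply, add_mul, Finset.sum_add_distrib]

lemma wnormSq_nonneg (hω : ∀ k, 0 < ω k) (g : Polynomial ℂ) : 0 ≤ wnormSq ω g :=
  Finset.sum_nonneg fun k _ => mul_nonneg (sq_nonneg _) (hω k).le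

lemma ip_sub_left (u v w : Fin N → ℂ) :
    ip ω N (u - v) w = ip ω N u w - ip ω N v w := by
  simp only [ip, Pi.sub_apply, sub_mul, Finset.sum_sub_distrib]

lemma ip_sum_right {ι : Type*} (s : Finset ι) (u : Fin N → ℂ) (v : ι → Fin N → ℂ) :
    ip ω N u (∑ i ∈ s, v i) = ∑ i ∈ s, ip ω N u (v i) := by
  simp only [ip, Finset.sum_apply, map_sum, Finset.mul_sum, Finset.sum_mul]
  exact Finset.sum_comm

lemma ip_smul_right (c : ℂ) (u v : Fin N → ℂ) :
    ip ω N u (c • v) = (starRingEnd ℂ) c * ip ω N u v := by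
  simp only [ip, Pi.smul_apply, smul_eq_mul, map_mul, Finset.mul_sum]
  exact Finset.sum_congr rfl fun k _ => by ring

lemma ip_sub_smul (u w : Fin N → ℂ) (t : ℂ) :
    ip ω N (u - t • w) (u - t • w) =
      ip ω N u u - (starRingEnd ℂ) t * ip ω N u w
        - t * (starRingEnd ℂ) (ip ω N u w)
        + t * (starRingEnd ℂ) t * ip ω N w w := by
  have hconj : (starRingEnd ℂ) (ip ω N u w)
      = ∑ k, (starRingEnd ℂ) (u k) * w k * ((ω k : ℝ) : ℂ) := by
    rw [ip, map_sum]
    refine Finset.sum_congr rfl fun k _ => ?_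
    simp only [map_mul, Complex.conj_conj, Complex.conj_ofReal]
  rw [hconj, ip, ip, ip, ip]
  simp only [Pi.sub_apply, Pi.smul_apply, smul_eq_mul, map_sub, map_mul,
    Finset.mul_sum, ← Finset.sum_sub_distrib, ← Finset.sum_add_distrib]
  refine Finset.sum_congr rfl fun k _ => ?_
  ring

lemma wnormSq_cast {g : Polynomial ℂ} (hg : g.natDegree < N) :
    ((wnormSq ω g : ℝ) : ℂ) = ip ω N (vecOf N g) (vecOf N g) := by
  rw [ip_self (ω := ω) (vecOf N g), Complex.ofReal_inj, wnormSq]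
  simp only [vecOf]
  rw [Fin.sum_univ_eq_sum_range (fun k => ‖g.coeff k‖ ^ 2 * ω k) N]
  refine Finset.sum_subset ?_ ?_
  · exact Finset.range_subset_range.mpr hg
  · intro k _ hk
    have : g.natDegree < k := by
      simp only [Finset.mem_range, not_lt] at hk
      omega
    simp [Polynomial.coeff_eq_zero_of_natDegree_lt this]

lemma vecOf_sub (g h : Polynomial ℂ) : vecOf N (g - h) = vecOf N g - vecOf N h := by
  funext k; simp [vecOf]

lemma vecOf_C_mul (t : ℂ) (g : Polynomial ℂ) : vecOf N (C t * g) = t • vecOf N g := by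
  funext k; simp [vecOf]

lemma ip_vec_ker (hω : ∀ k, 0 < ω k) {g : Polynomial ℂ} (hg : g.natDegree < N) (w : ℂ) :
    ip ω N (vecOf N g) (kervec ω N w) = g.eval w := by
  have hterm : ∀ k : Fin N,
      vecOf N g k * (starRingEnd ℂ) (kervec ω N w k) * ((ω k : ℝ) : ℂ)
        = g.coeff k * w ^ (k : ℕ) := by
    intro k
    have hωk : ((ω k : ℝ) : ℂ) ≠ 0 := by
      exact_mod_cast Complex.ofReal_ne_zero.mpr (hω k).ne'
    simp only [vecOf, kervec, map_div₀, map_pow, Complex.conj_conj, Complex.conj_ofReal]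
    field_simp
  rw [ip]
  simp only [hterm]
  rw [Polynomial.eval_eq_sum_range' hg,
    Fin.sum_univ_eq_sum_range (fun k => g.coeff k * w ^ k) N]

lemma ip_ker_ker (hω : ∀ k, 0 < ω k) (w₁ w₂ : ℂ) :
    ip ω N (kervec ω N w₁) (kervec ω N w₂)
      = ∑ k ∈ Finset.range N, (starRingEnd ℂ) w₁ ^ k * w₂ ^ k / ((ω k : ℝ) : ℂ) := by
  rw [ip, ← Fin.sum_univ_eq_sum_range
    (fun k => (starRingEnd ℂ) w₁ ^ k * w₂ ^ k / ((ω k : ℝ) : ℂ)) N]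
  refine Finset.sum_congr rfl fun k _ => ?_
  have hωk : ((ω k : ℝ) : ℂ) ≠ 0 := by
    exact_mod_cast Complex.ofReal_ne_zero.mpr (hω k).ne'
  simp only [kervec, map_div₀, map_pow, Complex.conj_conj, Complex.conj_ofReal]
  field_simp

end Stmt4Aux

open Polynomial Finset Stmt4Aux in
theorem stmt4
    (ω : ℕ → ℝ) (hω0 : ω 0 = 1) (hωpos : ∀ k, 0 < ω k)
    (hωlim : Filter.Tendsto (fun k => ω k / ω (k + 1)) Filter.atTop (nhds 1))
    (d : ℕ) (hd : 0 < d) (z : Fin d → ℂ)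
    (hzinj : Function.Injective z) (hz0 : ∀ i, z i ≠ 0)
    (f : Polynomial ℂ) (hf : f = ∏ i, (Polynomial.X - Polynomial.C (z i)))
    (n : ℕ) (p : Polynomial ℂ) (hpdeg : p.natDegree ≤ n)
    (hpopt : ∀ q : Polynomial ℂ, q.natDegree ≤ n →
      wnormSq ω (1 - p * f) ≤ wnormSq ω (1 - q * f))
    (E : Matrix (Fin d) (Fin d) ℂ)
    (hE : ∀ l m, E l m = wker ω (n + d) (z l) (z m))
    (A : Fin d → ℂ) (hA : A = E⁻¹.mulVec (fun _ => 1)) :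
    ((wnormSq ω (1 - p * f) : ℝ) : ℂ) = ∑ i, A i ∧
    (∑ i, A i) = ∑ l, ∑ m, E⁻¹ l m ∧
    (∑ i, A i).im = 0 ∧ 0 ≤ (∑ i, A i).re ∧ (∑ i, A i).re ≤ 1 := by
  classical
  set N : ℕ := n + d + 1 with hNdef
  -- basic facts about f
  have hfm : f.Monic := by
    rw [hf]; exact monic_prod_of_monic _ _ fun i _ => monic_X_sub_C _
  have hfd : f.natDegree = d := by
    rw [hf, natDegree_prod_of_monic _ _ fun i _ => monic_X_sub_C _]
    simp
  have hfne : f ≠ 0 := hfm.ne_zero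
  have hfz : ∀ l, f.eval (z l) = 0 := by
    intro l; rw [hf, eval_prod]
    exact Finset.prod_eq_zero (mem_univ l) (by simp)
  have hmuldeg : ∀ q : Polynomial ℂ, q.natDegree ≤ n → (q * f).natDegree < N := by
    intro q hq
    have := natDegree_mul_le (p := q) (q := f)
    omega
  have hdeg : ∀ q : Polynomial ℂ, q.natDegree ≤ n → (1 - q * f).natDegree < N := by
    intro q hq
    have h1 := hmuldeg q hq
    have h2 := natDegree_sub_le (1 : Polynomial ℂ) (q * f)
    have h3 : (1 : Polynomial ℂ).natDegree = 0 := natDegree_one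
    omega
  set r : Polynomial ℂ := 1 - p * f with hrdef
  have hrdeg : r.natDegree < N := hdeg p hpdeg
  set rv : Fin N → ℂ := vecOf N r with hrv
  set κ : Fin d → (Fin N → ℂ) := fun l => kervec ω N (z l) with hκdef
  have hreval : ∀ m, r.eval (z m) = 1 := by
    intro m; rw [hrdef]; simp [hfz m]
  have hrκ : ∀ m, ip ω N rv (κ m) = 1 := by
    intro m
    rw [hrv, hκdef, ip_vec_ker hωpos hrdeg]
    exact hreval m
  have hκκ : ∀ l m, ip ω N (κ l) (κ m) = E m l := by
    intro l m
    rw [hκdef, ip_ker_ker hωpos, hE m l, wker]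
  -- orthogonality from optimality
  have horth : ∀ q : Polynomial ℂ, q.natDegree ≤ n →
      ip ω N rv (vecOf N (q * f)) = 0 := by
    intro q hq
    set w : Fin N → ℂ := vecOf N (q * f) with hwdef
    set c : ℂ := ip ω N rv w with hcdef
    by_contra hc0
    have hnc : 0 < Complex.normSq c := Complex.normSq_pos.mpr hc0
    set nc : ℝ := Complex.normSq c with hncdef
    set Br : ℝ := wnormSq ω (q * f) with hBrdef
    have hBrnn : 0 ≤ Br := wnormSq_nonneg hωpos _
    have hBB : ((Br : ℝ) : ℂ) = ip ω N w w := wnormSq_cast (hmuldeg q hq)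
    set ε : ℝ := 1 / (Br + 1) with hεdef
    have hε : 0 < ε := by positivity
    have hεB : ε * (Br + 1) = 1 := by
      rw [hεdef]; field_simp
    set t : ℂ := (ε : ℂ) * c with htdef
    set q' : Polynomial ℂ := p + C t * q with hq'def
    have hq' : q'.natDegree ≤ n := by
      refine (natDegree_add_le _ _).trans (max_le hpdeg ?_)
      exact (natDegree_C_mul_le _ _).trans hq
    have hsub : (1 : Polynomial ℂ) - q' * f = r - C t * (q * f) := by
      rw [hrdef, hq'def]; ring
    have hineq := hpopt q' hq'
    rw [hsub] at hineq
    have hdeg2 : (r - C t * (q * f)).natDegree < N := by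
      have h1 := natDegree_sub_le r (C t * (q * f))
      have h2 := (natDegree_C_mul_le t (q * f)).trans_lt (hmuldeg q hq)
      omega
    have hvec : vecOf N (r - C t * (q * f)) = rv - t • w := by
      rw [vecOf_sub, vecOf_C_mul, hrv, hwdef]
    have hRr : ((wnormSq ω r : ℝ) : ℂ) = ip ω N rv rv := wnormSq_cast hrdeg
    have hcomp : ((wnormSq ω (r - C t * (q * f)) : ℝ) : ℂ)
        = ((wnormSq ω r - 2 * ε * nc + ε ^ 2 * nc * Br : ℝ) : ℂ) := by
      rw [wnormSq_cast hdeg2, hvec, ip_sub_smul, ← hcdef, ← hRr, ← hBB, htdef]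
      push_cast
      rw [map_mul, Complex.conj_ofReal]
      have hcc : c * (starRingEnd ℂ) c = ((nc : ℝ) : ℂ) := Complex.mul_conj c
      linear_combination ((ε : ℂ) ^ 2 * (Br : ℂ) - 2 * (ε : ℂ)) * hcc
    have hreal : wnormSq ω (r - C t * (q * f))
        = wnormSq ω r - 2 * ε * nc + ε ^ 2 * nc * Br := by
      exact_mod_cast hcomp
    rw [hreal] at hineq
    nlinarith [mul_pos hε hnc, hεB, sq_nonneg ε, mul_pos (mul_pos hε hε) hnc]
  -- linear independence of the kernel vectors
  have hκind : LinearIndependent ℂ κ := by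
    rw [Fintype.linearIndependent_iff]
    intro c hc l
    have hvdm : ∀ k : Fin d, ∑ l, c l * (starRingEnd ℂ) (z l) ^ (k : ℕ) = 0 := by
      intro k
      have hkN : (k : ℕ) < N := by omega
      have h := congrFun hc (⟨(k : ℕ), hkN⟩ : Fin N)
      simp only [hκdef, kervec, Finset.sum_apply, Pi.smul_apply, smul_eq_mul,
        Pi.zero_apply] at h
      have hωk : ((ω (k : ℕ) : ℝ) : ℂ) ≠ 0 :=
        Complex.ofReal_ne_zero.mpr (hωpos (k : ℕ)).ne'
      have h2 := congrArg (fun x => x * ((ω (k : ℕ) : ℝ) : ℂ)) h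
      simp only [Finset.sum_mul, zero_mul] at h2
      rw [← h2]
      refine Finset.sum_congr rfl fun l _ => ?_
      field_simp
    have hdet : (Matrix.vandermonde fun l => (starRingEnd ℂ) (z l)).det ≠ 0 := by
      rw [Matrix.det_vandermonde]
      refine Finset.prod_ne_zero_iff.mpr fun i _ => Finset.prod_ne_zero_iff.mpr
        fun j hj => sub_ne_zero.mpr fun hzz => ?_
      have : z j = z i := by
        have := (starRingEnd ℂ).injective hzz
        exact this
      have := hzinj this
      rw [Finset.mem_Ioi] at hj
      exact absurd this (ne_of_gt hj)
    have hv0 : Matrix.vecMul c (Matrix.vandermonde fun l => (starRingEnd ℂ) (z l)) = 0 := by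
      funext k
      simpa [Matrix.vecMul, dotProduct, Matrix.vandermonde] using hvdm k
    exact congrFun (Matrix.eq_zero_of_vecMul_eq_zero hdet hv0) l
  -- E is invertible
  have hEdet : IsUnit E.det := by
    rw [isUnit_iff_ne_zero]
    intro h0
    obtain ⟨c, hc0, hc⟩ := Matrix.exists_mulVec_eq_zero_iff.mpr h0
    set v : Fin N → ℂ := ∑ l, c l • κ l with hvdef
    have hvκ : ∀ m, ip ω N v (κ m) = 0 := by
      intro m
      rw [hvdef, ip_sum_left]
      simp only [ip_smul_left]
      have h1 : ∑ l, c l * ip ω N (κ l) (κ m) = E.mulVec c m := by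
        simp only [hκκ, Matrix.mulVec, dotProduct]
        exact Finset.sum_congr rfl fun l _ => mul_comm _ _
      rw [h1, hc]
      rfl
    have hvv : ip ω N v v = 0 := by
      have h1 : ip ω N v v = ip ω N v (∑ m, c m • κ m) := congrArg _ hvdef
      rw [h1, ip_sum_right]
      simp only [ip_smul_right]
      exact Finset.sum_eq_zero fun m _ => by rw [hvκ m, mul_zero]
    have hv0 : v = 0 := ip_self_eq_zero hωpos hvv
    rw [hvdef] at hv0
    exact hc0 (funext fun l => Fintype.linearIndependent_iff.mp hκind c hv0 l)
  have hEA : E.mulVec A = fun _ => 1 := by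
    rw [hA, Matrix.mulVec_mulVec, Matrix.mul_nonsing_inv _ hEdet, Matrix.one_mulVec]
  -- the combined family
  have hwdeg : ∀ j : Fin (n + 1), ((X : Polynomial ℂ) ^ (j : ℕ) * f).natDegree < N :=
    fun j => hmuldeg _ (by rw [natDegree_X_pow]; omega)
  have hκw : ∀ (l : Fin d) (j : Fin (n + 1)),
      ip ω N (vecOf N ((X : Polynomial ℂ) ^ (j : ℕ) * f)) (κ l) = 0 := by
    intro l j
    rw [hκdef, ip_vec_ker hωpos (hwdeg j)]
    simp [hfz l]
  set u : Fin d ⊕ Fin (n + 1) → (Fin N → ℂ) :=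
    Sum.elim κ (fun j => vecOf N ((X : Polynomial ℂ) ^ (j : ℕ) * f)) with hudef
  have huind : LinearIndependent ℂ u := by
    rw [Fintype.linearIndependent_iff]
    intro c hc
    rw [hudef, Fintype.sum_sum_type] at hc
    simp only [Sum.elim_inl, Sum.elim_inr] at hc
    set q : Polynomial ℂ := ∑ j : Fin (n + 1), C (c (Sum.inr j)) * X ^ (j : ℕ) with hqdef
    have hqn : q.natDegree ≤ n := by
      rw [hqdef]
      refine natDegree_sum_le_of_forall_le _ _ fun j _ => ?_
      exact (natDegree_C_mul_le _ _).trans (by rw [natDegree_X_pow]; omega)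
    have hq2 : ∑ j : Fin (n + 1), c (Sum.inr j) • vecOf N ((X : Polynomial ℂ) ^ (j : ℕ) * f)
        = vecOf N (q * f) := by
      funext k
      simp only [Finset.sum_apply, Pi.smul_apply, smul_eq_mul, vecOf, hqdef,
        Finset.sum_mul, finset_sum_coeff, mul_assoc, coeff_C_mul]
    rw [hq2] at hc
    have ha : (fun l => c (Sum.inl l)) = 0 := by
      refine Matrix.eq_zero_of_mulVec_eq_zero hEdet.ne_zero (funext fun m => ?_)
      have h := congrArg (fun v => ip ω N v (κ m)) hc
      rw [ip_add_left, ip_sum_left] at h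
      simp only [ip_smul_left] at h
      have hz' : ip ω N (0 : Fin N → ℂ) (κ m) = 0 := by simp [ip]
      have h2 : ip ω N (vecOf N (q * f)) (κ m) = 0 := by
        rw [hκdef, ip_vec_ker hωpos (hmuldeg q hqn)]
        simp [hfz m]
      rw [h2, hz'] at h
      have h4 : ∑ x, c (Sum.inl x) * ip ω N (κ x) (κ m) = 0 := by
        simpa using h
      have h5 : E.mulVec (fun l => c (Sum.inl l)) m
          = ∑ x, c (Sum.inl x) * ip ω N (κ x) (κ m) := by
        simp only [hκκ, Matrix.mulVec, dotProduct]
        exact Finset.sum_congr rfl fun l _ => mul_comm _ _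
      show E.mulVec (fun l => c (Sum.inl l)) m = (0 : Fin d → ℂ) m
      rw [h5, h4]
      rfl
    have hqf : vecOf N (q * f) = 0 := by
      have hsum0 : ∑ x : Fin d, c (Sum.inl x) • κ x = 0 :=
        Finset.sum_eq_zero fun x _ => by
          have hx : c (Sum.inl x) = 0 := congrFun ha x
          rw [hx, zero_smul]
      rw [hsum0, zero_add] at hc
      exact hc
    have hqf0 : q * f = 0 := by
      ext k
      rcases lt_or_ge k N with hk | hk
      · exact congrFun hqf ⟨k, hk⟩
      · exact coeff_eq_zero_of_natDegree_lt (lt_of_lt_of_le (hmuldeg q hqn) hk)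
    have hq0 : q = 0 := by
      rcases mul_eq_zero.mp hqf0 with h | h
      · exact h
      · exact absurd h hfne
    rintro (l | j)
    · exact congrFun ha l
    · have := congrArg (fun g => Polynomial.coeff g (j : ℕ)) hq0
      simp only [hqdef, finset_sum_coeff, coeff_C_mul, coeff_X_pow, coeff_zero,
        mul_ite, mul_one, mul_zero] at this
      rw [Finset.sum_eq_single j (fun i _ hij => by
          rw [if_neg fun hh => hij (Fin.val_injective hh.symm)])
        (fun hj => absurd (Finset.mem_univ j) hj)] at this
      simpa using this
  -- a basis from the family
  haveI : Nonempty (Fin d ⊕ Fin (n + 1)) := ⟨Sum.inl ⟨0, hd⟩⟩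
  have hcard : Fintype.card (Fin d ⊕ Fin (n + 1)) = Module.finrank ℂ (Fin N → ℂ) := by
    simp [Module.finrank_fin_fun]
    omega
  set bb := basisOfLinearIndependentOfCardEqFinrank huind hcard with hbbdef
  have hbb : ∀ j, bb j = u j := fun j => by
    rw [hbbdef, coe_basisOfLinearIndependentOfCardEqFinrank]
  -- the residual vector is zero
  set s : Fin N → ℂ := rv - ∑ l, A l • κ l with hsdef
  have hsκ : ∀ m, ip ω N s (κ m) = 0 := by
    intro m
    rw [hsdef, ip_sub_left, ip_sum_left]
    simp only [ip_smul_left]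
    rw [hrκ m]
    have h3 : ∑ l, A l * ip ω N (κ l) (κ m) = E.mulVec A m := by
      simp only [hκκ, Matrix.mulVec, dotProduct]
      exact Finset.sum_congr rfl fun l _ => mul_comm _ _
    rw [h3, hEA]
    simp
  have hsw : ∀ j : Fin (n + 1),
      ip ω N s (vecOf N ((X : Polynomial ℂ) ^ (j : ℕ) * f)) = 0 := by
    intro j
    rw [hsdef, ip_sub_left, ip_sum_left]
    simp only [ip_smul_left]
    have h1 : ip ω N rv (vecOf N ((X : Polynomial ℂ) ^ (j : ℕ) * f)) = 0 :=
      horth _ (by rw [natDegree_X_pow]; omega)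
    have h2 : ∀ l, ip ω N (κ l) (vecOf N ((X : Polynomial ℂ) ^ (j : ℕ) * f)) = 0 := by
      intro l
      rw [ip_conj, hκw l j, map_zero]
    rw [h1]
    simp [h2]
  have hsu : ∀ j, ip ω N s (u j) = 0 := by
    rintro (l | j)
    · exact hsκ l
    · exact hsw j
  have hss : ip ω N s s = 0 := by
    have hrepr := bb.sum_repr s
    have h1 : ip ω N s s = ip ω N s (∑ j, bb.repr s j • bb j) := by rw [hrepr]
    rw [h1, ip_sum_right]
    simp only [ip_smul_right]
    refine Finset.sum_eq_zero fun j _ => ?_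
    rw [hbb j, hsu j, mul_zero]
  have hs0 : rv = ∑ l, A l • κ l := by
    have := ip_self_eq_zero hωpos hss
    rw [hsdef] at this
    exact sub_eq_zero.mp this
  -- conclusion
  have hκrv : ∀ l, ip ω N (κ l) rv = 1 := fun l => by
    rw [ip_conj, hrκ l, map_one]
  have goal1 : ((wnormSq ω r : ℝ) : ℂ) = ∑ i, A i := by
    rw [wnormSq_cast hrdeg, ← hrv]
    calc ip ω N rv rv = ip ω N (∑ l, A l • κ l) rv := by rw [← hs0]
      _ = ∑ l, A l * ip ω N (κ l) rv := by
          rw [ip_sum_left]; exact Finset.sum_congr rfl fun l _ => ip_smul_left _ _ _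
      _ = ∑ i, A i := by simp [hκrv]
  have goal2 : (∑ i, A i) = ∑ l, ∑ m, E⁻¹ l m := by
    rw [hA]
    simp [Matrix.mulVec, dotProduct]
  have hnn : 0 ≤ wnormSq ω r := wnormSq_nonneg hωpos r
  have hle : wnormSq ω r ≤ 1 := by
    have h := hpopt 0 (by simp)
    have h1 : (1 : Polynomial ℂ) - 0 * f = 1 := by ring
    rw [h1] at h
    have h2 : wnormSq ω 1 = 1 := by
      rw [wnormSq]
      simp [hω0]
    rw [h2] at h
    exact h
  refine ⟨goal1, goal2, ?_, ?_, ?_⟩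
  · rw [← goal1, Complex.ofReal_im]
  · rw [← goal1, Complex.ofReal_re]; exact hnn
  · rw [← goal1, Complex.ofReal_re]; exact hle
end

section
/- Let f be a monic polynomial of degree d ≥ 1 with simple (distinct) zeros z_1, …, z_d, all lying on the unit circle (|z_i| = 1 for all i). For each n ∈ ℕ let E = E_{Z,n} be the d×d matrix with entries e_{l,m} = k_{n+d}(z_l, z_m), and write E^{-1} = (u_{i,j})_{i,j=1}^d. Then there exists a constant C(Z, ω) > 0, independent of n, such that for all n and all i, j, |u_{i,j}| ≤ C(Z, ω) · (∑_{k=0}^n 1/ω_k)^{-1}. -/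
open Finset



lemma auxM (ω : ℕ → ℝ) (hωpos : ∀ k, 0 < ω k)
    (hωlim : Filter.Tendsto (fun k => ω k / ω (k + 1)) Filter.atTop (nhds 1)) :
    ∃ M : ℝ, 1 ≤ M ∧ ∀ k, ω (k + 1) ≤ M * ω k := by
  rw [Metric.tendsto_atTop] at hωlim
  obtain ⟨N, hN⟩ := hωlim (1/2) (by norm_num)
  have hsn : (0:ℝ) ≤ ∑ j ∈ range N, ω (j + 1) / ω j :=
    sum_nonneg fun j _ => le_of_lt (div_pos (hωpos _) (hωpos _))
  refine ⟨2 + ∑ k ∈ range N, ω (k + 1) / ω k, by linarith, fun k => ?_⟩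
  rcases lt_or_ge k N with hk | hk
  · have h1 : ω (k + 1) / ω k ≤ ∑ j ∈ range N, ω (j + 1) / ω j :=
      single_le_sum (f := fun j => ω (j + 1) / ω j)
        (fun j _ => le_of_lt (div_pos (hωpos _) (hωpos _))) (mem_range.2 hk)
    have h2 : ω (k + 1) / ω k ≤ 2 + ∑ j ∈ range N, ω (j + 1) / ω j := by linarith
    calc ω (k+1) = (ω (k+1) / ω k) * ω k := by field_simp [(hωpos k).ne']
    _ ≤ _ := mul_le_mul_of_nonneg_right h2 (hωpos k).le
  · have := hN k hk
    rw [Real.dist_eq, abs_lt] at this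
    have h3 : (1:ℝ)/2 < ω k / ω (k+1) := by linarith [this.1]
    have h4 : ω (k + 1) ≤ 2 * ω k := by
      have := (div_lt_div_iff₀ (by norm_num) (hωpos (k+1))).mp h3
      linarith
    nlinarith [hωpos k]

lemma auxMpow (ω : ℕ → ℝ) (hωpos : ∀ k, 0 < ω k) (M : ℝ) (hM : 1 ≤ M)
    (h : ∀ k, ω (k + 1) ≤ M * ω k) (d : ℕ) :
    ∀ k r, r ≤ d → ω (k + r) ≤ M ^ d * ω k := by
  have key : ∀ r k, ω (k + r) ≤ M ^ r * ω k := by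
    intro r
    induction r with
    | zero => intro k; simp
    | succ r ih =>
      intro k
      have : ω (k + r + 1) ≤ M * ω (k + r) := h (k + r)
      calc ω (k + (r+1)) = ω (k + r + 1) := by ring_nf
      _ ≤ M * ω (k + r) := this
      _ ≤ M * (M ^ r * ω k) := by
          apply mul_le_mul_of_nonneg_left (ih k) (by linarith)
      _ = M ^ (r+1) * ω k := by ring
  intro k r hr
  calc ω (k + r) ≤ M ^ r * ω k := key r k
  _ ≤ M ^ d * ω k := by
      apply mul_le_mul_of_nonneg_right (pow_le_pow_right₀ (by linarith) hr) (hωpos k).le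

lemma auxCS {d : ℕ} (W : Matrix (Fin d) (Fin d) ℂ) (c : Fin d → ℂ) :
    ∑ l, ‖W.mulVec c l‖^2 ≤ (∑ l, ∑ r, ‖W l r‖^2) * ∑ r, ‖c r‖^2 := by
  rw [sum_mul]
  apply sum_le_sum
  intro l _
  have h1 : ‖W.mulVec c l‖ ≤ ∑ r, ‖W l r‖ * ‖c r‖ := by
    simpa [Matrix.mulVec, dotProduct] using
      norm_sum_le univ (fun r => W l r * c r) |>.trans (le_of_eq (by simp))
  calc ‖W.mulVec c l‖^2 ≤ (∑ r, ‖W l r‖ * ‖c r‖)^2 := by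
        apply sq_le_sq' _ h1
        have : (0:ℝ) ≤ ∑ r, ‖W l r‖ * ‖c r‖ := sum_nonneg fun r _ => by positivity
        linarith [norm_nonneg (W.mulVec c l)]
  _ ≤ (∑ r, ‖W l r‖^2) * ∑ r, ‖c r‖^2 := sum_mul_sq_le_sq_mul_sq univ _ _

lemma auxVand {d : ℕ} (hd : 0 < d) (w : Fin d → ℂ) (hw : Function.Injective w)
    (hw1 : ∀ l, ‖w l‖ = 1) :
    ∃ K : ℝ, 0 < K ∧ ∀ (a : Fin d → ℂ) (k : ℕ),
      ∑ l, ‖a l‖^2 ≤ K * ∑ r : Fin d, ‖∑ l, a l * w l ^ (k + (r:ℕ))‖^2 := by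
  set V : Matrix (Fin d) (Fin d) ℂ := Matrix.transpose (Matrix.vandermonde w) with hV
  have hdet : V.det ≠ 0 := by
    rw [Matrix.det_transpose]
    exact Matrix.det_vandermonde_ne_zero_iff.mpr hw
  have hunit : IsUnit V.det := isUnit_iff_ne_zero.mpr hdet
  set W := V⁻¹ with hW
  have hWV : W * V = 1 := Matrix.nonsing_inv_mul V hunit
  refine ⟨(∑ l, ∑ r, ‖W l r‖^2) + 1, by positivity, fun a k => ?_⟩
  set b : Fin d → ℂ := fun l => a l * w l ^ k with hb
  set c : Fin d → ℂ := V.mulVec b with hc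
  have hcb : ∀ r : Fin d, c r = ∑ l, a l * w l ^ (k + (r:ℕ)) := by
    intro r
    simp only [hc, Matrix.mulVec, dotProduct, hV, Matrix.transpose_apply,
      Matrix.vandermonde, Matrix.of_apply, hb]
    apply sum_congr rfl
    intro l _
    rw [pow_add]
    ring
  have hWc : W.mulVec c = b := by
    rw [hc, Matrix.mulVec_mulVec, hWV, Matrix.one_mulVec]
  have hnb : ∀ l, ‖b l‖ = ‖a l‖ := by
    intro l
    rw [hb]
    simp [norm_mul, norm_pow, hw1 l]
  have h1 : ∑ l, ‖a l‖^2 = ∑ l, ‖W.mulVec c l‖^2 := by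
    rw [hWc]
    exact sum_congr rfl fun l _ => by rw [hnb l]
  rw [h1]
  calc ∑ l, ‖W.mulVec c l‖^2 ≤ (∑ l, ∑ r, ‖W l r‖^2) * ∑ r, ‖c r‖^2 := auxCS W c
  _ ≤ ((∑ l, ∑ r, ‖W l r‖^2) + 1) * ∑ r, ‖c r‖^2 := by
      apply mul_le_mul_of_nonneg_right (by linarith) (sum_nonneg fun r _ => sq_nonneg _)
  _ = ((∑ l, ∑ r, ‖W l r‖^2) + 1) * ∑ r : Fin d, ‖∑ l, a l * w l ^ (k + (r:ℕ))‖^2 := by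
      congr 1
      exact sum_congr rfl fun r _ => by rw [hcb r]

lemma auxCoercive (ω : ℕ → ℝ) (hωpos : ∀ k, 0 < ω k) (M : ℝ) (hM : 1 ≤ M)
    (d : ℕ) (hd : 0 < d)
    (hMd : ∀ k r, r ≤ d → ω (k + r) ≤ M ^ d * ω k)
    (h : ℕ → ℂ) (K : ℝ) (hK : 0 < K) (Na : ℝ) (hNa : 0 ≤ Na)
    (hVand : ∀ k : ℕ, Na ≤ K * ∑ r : Fin d, ‖h (k + (r:ℕ))‖^2)
    (n : ℕ) :
    Na * ∑ k ∈ range (n+1), (ω k)⁻¹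
      ≤ (K * d * M^d) * ∑ k ∈ range (n+d+1), ‖h k‖^2 / ω k := by
  set T := ∑ k ∈ range (n+d+1), ‖h k‖^2 / ω k with hT
  have hT0 : 0 ≤ T := sum_nonneg fun k _ => div_nonneg (sq_nonneg _) (hωpos k).le
  have hMd0 : (0:ℝ) < M ^ d := by positivity
  have step1 : ∀ r : Fin d, ∑ k ∈ range (n+1), ‖h (k+(r:ℕ))‖^2 / ω (k+(r:ℕ)) ≤ T := by
    intro r
    have he : ∑ k ∈ range (n+1), ‖h (k+(r:ℕ))‖^2 / ω (k+(r:ℕ))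
        = ∑ j ∈ (range (n+1)).image (· + (r:ℕ)), ‖h j‖^2 / ω j := by
      rw [sum_image]
      intro x _ y _ hxy
      simp only at hxy
      omega
    rw [he, hT]
    apply sum_le_sum_of_subset_of_nonneg
    · intro j hj
      simp only [mem_image, mem_range] at hj ⊢
      obtain ⟨x, hx, rfl⟩ := hj
      have := r.isLt
      omega
    · intro j _ _
      exact div_nonneg (sq_nonneg _) (hωpos j).le
  have step2 : ∀ k ∈ range (n+1),
      Na * (ω k)⁻¹ ≤ (K * M^d) * ∑ r : Fin d, ‖h (k+(r:ℕ))‖^2 / ω (k+(r:ℕ)) := by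
    intro k _
    have h1 : ∑ r : Fin d, ‖h (k+(r:ℕ))‖^2 / (M^d * ω k)
        ≤ ∑ r : Fin d, ‖h (k+(r:ℕ))‖^2 / ω (k+(r:ℕ)) := by
      apply sum_le_sum
      intro r _
      apply div_le_div_of_nonneg_left (sq_nonneg _) (hωpos _)
      exact hMd k r (le_of_lt r.isLt)
    have h2 : Na / K ≤ ∑ r : Fin d, ‖h (k+(r:ℕ))‖^2 := by
      rw [div_le_iff₀ hK]
      linarith [hVand k, mul_comm K (∑ r : Fin d, ‖h (k+(r:ℕ))‖^2)]
    have h3 : Na / K / (M^d * ω k) ≤ ∑ r : Fin d, ‖h (k+(r:ℕ))‖^2 / (M^d * ω k) := by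
      rw [← sum_div]
      exact div_le_div_of_nonneg_right h2 (mul_pos hMd0 (hωpos k)).le
    calc Na * (ω k)⁻¹ = (K * M^d) * (Na / K / (M^d * ω k)) := by
          have hk0 := (hωpos k).ne'
          have hK0 := hK.ne'
          have hM0 : M ≠ 0 := by positivity
          field_simp
    _ ≤ (K * M^d) * ∑ r : Fin d, ‖h (k+(r:ℕ))‖^2 / (M^d * ω k) := by
          apply mul_le_mul_of_nonneg_left h3 (by positivity)
    _ ≤ (K * M^d) * ∑ r : Fin d, ‖h (k+(r:ℕ))‖^2 / ω (k+(r:ℕ)) := by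
          apply mul_le_mul_of_nonneg_left h1 (by positivity)
  calc Na * ∑ k ∈ range (n+1), (ω k)⁻¹
      = ∑ k ∈ range (n+1), Na * (ω k)⁻¹ := by rw [mul_sum]
  _ ≤ ∑ k ∈ range (n+1), (K * M^d) * ∑ r : Fin d, ‖h (k+(r:ℕ))‖^2 / ω (k+(r:ℕ)) :=
      sum_le_sum step2
  _ = (K * M^d) * ∑ r : Fin d, ∑ k ∈ range (n+1), ‖h (k+(r:ℕ))‖^2 / ω (k+(r:ℕ)) := by
      rw [← mul_sum]
      congr 1
      exact sum_comm
  _ ≤ (K * M^d) * ∑ r : Fin d, T := by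
      apply mul_le_mul_of_nonneg_left (sum_le_sum fun r _ => step1 r) (by positivity)
  _ = (K * d * M^d) * T := by
      rw [sum_const, card_univ, Fintype.card_fin]
      push_cast
      ring

lemma auxQ (ω : ℕ → ℝ) {d : ℕ} (z : Fin d → ℂ) (N : ℕ) (a : Fin d → ℂ) :
    ∑ l, ∑ m, (starRingEnd ℂ) (a l) * wker ω N (z l) (z m) * a m
      = ((∑ k ∈ range (N+1), ‖∑ l, a l * (starRingEnd ℂ (z l)) ^ k‖^2 / ω k : ℝ) : ℂ) := by
  have key : ∀ k : ℕ,
      (∑ l, (starRingEnd ℂ) (a l) * (z l)^k) * (∑ m, a m * (starRingEnd ℂ (z m))^k)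
        = ((‖∑ l, a l * (starRingEnd ℂ (z l)) ^ k‖^2 : ℝ) : ℂ) := by
    intro k
    have h1 : ∑ l, (starRingEnd ℂ) (a l) * (z l)^k
        = (starRingEnd ℂ) (∑ l, a l * (starRingEnd ℂ (z l)) ^ k) := by
      rw [map_sum]
      apply sum_congr rfl
      intro l _
      rw [map_mul, map_pow]
      simp
    rw [h1, mul_comm, Complex.mul_conj]
    norm_cast
    rw [Complex.normSq_eq_norm_sq]
  calc ∑ l, ∑ m, (starRingEnd ℂ) (a l) * wker ω N (z l) (z m) * a m
      = ∑ l, ∑ m, ∑ k ∈ range (N+1),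
          (starRingEnd ℂ) (a l) * ((starRingEnd ℂ (z m))^k * (z l)^k / (ω k : ℂ)) * a m := by
        apply sum_congr rfl; intro l _
        apply sum_congr rfl; intro m _
        rw [wker, Finset.mul_sum, Finset.sum_mul]
  _ = ∑ l, ∑ k ∈ range (N+1), ∑ m,
          (starRingEnd ℂ) (a l) * ((starRingEnd ℂ (z m))^k * (z l)^k / (ω k : ℂ)) * a m := by
        apply sum_congr rfl; intro l _
        exact Finset.sum_comm
  _ = ∑ k ∈ range (N+1), ∑ l, ∑ m,
          (starRingEnd ℂ) (a l) * ((starRingEnd ℂ (z m))^k * (z l)^k / (ω k : ℂ)) * a m :=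
        Finset.sum_comm
  _ = ∑ k ∈ range (N+1),
        (∑ l, (starRingEnd ℂ) (a l) * (z l)^k) * (∑ m, a m * (starRingEnd ℂ (z m))^k)
          / (ω k : ℂ) := by
        apply sum_congr rfl; intro k _
        rw [Finset.sum_mul_sum, Finset.sum_div]
        apply sum_congr rfl; intro l _
        rw [Finset.sum_div]
        apply sum_congr rfl; intro m _
        ring
  _ = _ := by
        rw [Complex.ofReal_sum]
        apply sum_congr rfl; intro k _
        rw [key k]
        push_cast
        ring

theorem stmt5
    (ω : ℕ → ℝ) (hω0 : ω 0 = 1) (hωpos : ∀ k, 0 < ω k)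
    (hωlim : Filter.Tendsto (fun k => ω k / ω (k + 1)) Filter.atTop (nhds 1))
    (d : ℕ) (hd : 0 < d) (z : Fin d → ℂ)
    (hzinj : Function.Injective z) (hcirc : ∀ i, ‖z i‖ = 1)
    (f : Polynomial ℂ) (hf : f = ∏ i, (Polynomial.X - Polynomial.C (z i)))
    (E : ℕ → Matrix (Fin d) (Fin d) ℂ)
    (hE : ∀ n l m, E n l m = wker ω (n + d) (z l) (z m)) :
    ∃ C : ℝ, 0 < C ∧ ∀ n : ℕ, ∀ i j : Fin d,
      ‖(E n)⁻¹ i j‖ ≤ C * (∑ k ∈ Finset.range (n + 1), (ω k)⁻¹)⁻¹ := by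
  set w : Fin d → ℂ := fun l => starRingEnd ℂ (z l) with hwdef
  have hwinj : Function.Injective w := by
    intro l m hlm
    exact hzinj (star_injective hlm)
  have hw1 : ∀ l, ‖w l‖ = 1 := fun l => by
    simp only [hwdef, RCLike.norm_conj]
    exact hcirc l
  obtain ⟨M, hM1, hMstep⟩ := auxM ω hωpos hωlim
  have hMd := auxMpow ω hωpos M hM1 hMstep d
  obtain ⟨K, hK, hVand⟩ := auxVand hd w hwinj hw1
  have hd' : (0:ℝ) < d := by exact_mod_cast hd
  set C : ℝ := K * d * M ^ d with hC
  have hM0 : (0:ℝ) < M := by linarith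
  have hC0 : 0 < C := by positivity
  refine ⟨C, hC0, ?_⟩
  intro n i j
  set S := ∑ k ∈ Finset.range (n+1), (ω k)⁻¹ with hS
  have hS0 : 0 < S := sum_pos (fun k _ => inv_pos.2 (hωpos k)) ⟨0, mem_range.2 (Nat.succ_pos n)⟩
  have coercive : ∀ a : Fin d → ℂ,
      (∑ l, ‖a l‖^2) * S
        ≤ C * ∑ k ∈ range (n+d+1), ‖∑ l, a l * w l ^ k‖^2 / ω k := by
    intro a
    exact auxCoercive ω hωpos M hM1 d hd hMd (fun k => ∑ l, a l * w l ^ k) K hK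
      (∑ l, ‖a l‖^2) (sum_nonneg fun l _ => sq_nonneg _) (fun k => hVand a k) n
  have Qid : ∀ a : Fin d → ℂ, ∑ l, ∑ m, (starRingEnd ℂ) (a l) * (E n) l m * a m
      = ((∑ k ∈ range (n+d+1), ‖∑ l, a l * w l ^ k‖^2 / ω k : ℝ) : ℂ) := by
    intro a
    have h1 : ∑ l, ∑ m, (starRingEnd ℂ) (a l) * (E n) l m * a m
        = ∑ l, ∑ m, (starRingEnd ℂ) (a l) * wker ω (n+d) (z l) (z m) * a m := by
      apply sum_congr rfl; intro l _
      apply sum_congr rfl; intro m _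
      rw [hE n l m]
    rw [h1, auxQ ω z (n+d) a]
  have hker : ∀ a : Fin d → ℂ, (E n).mulVec a = 0 → a = 0 := by
    intro a ha
    have hrow : ∀ l, ∑ m, E n l m * a m = 0 := by
      intro l
      have := congrFun ha l
      simpa [Matrix.mulVec, dotProduct] using this
    have hq : ∑ l, ∑ m, (starRingEnd ℂ) (a l) * (E n) l m * a m = 0 := by
      have : ∀ l, ∑ m, (starRingEnd ℂ) (a l) * (E n) l m * a m
          = (starRingEnd ℂ) (a l) * ∑ m, E n l m * a m := by
        intro l
        rw [Finset.mul_sum]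
        apply sum_congr rfl; intro m _
        ring
      simp only [this]
      simp [hrow]
    rw [Qid a] at hq
    have hreal : (∑ k ∈ range (n+d+1), ‖∑ l, a l * w l ^ k‖^2 / ω k : ℝ) = 0 := by
      exact_mod_cast hq
    have h2 : (∑ l, ‖a l‖^2) * S ≤ 0 := by
      have := coercive a
      rw [hreal] at this
      simpa using this
    have hN0 : ∑ l, ‖a l‖^2 = 0 := by
      have hnn : 0 ≤ ∑ l, ‖a l‖^2 := sum_nonneg fun l _ => sq_nonneg _
      nlinarith
    funext l
    have h3 : ‖a l‖^2 ≤ 0 := by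
      rw [← hN0]
      exact single_le_sum (fun m _ => sq_nonneg ‖a m‖) (mem_univ l)
    have : ‖a l‖ = 0 := by nlinarith [norm_nonneg (a l), sq_nonneg ‖a l‖]
    simpa using this
  have hinv : IsUnit (E n) := by
    rw [← Matrix.mulVec_injective_iff_isUnit]
    intro x y hxy
    have : (E n).mulVec (x - y) = 0 := by
      rw [Matrix.mulVec_sub, hxy, sub_self]
    have := hker _ this
    exact sub_eq_zero.mp this
  have hdet : IsUnit (E n).det := (Matrix.isUnit_iff_isUnit_det _).mp hinv
  set B := (E n)⁻¹ with hB
  have hAB : E n * B = 1 := Matrix.mul_nonsing_inv _ hdet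
  set cv : Fin d → ℂ := fun i' => B i' j with hcv
  have hAcv : (E n).mulVec cv = Pi.single j 1 := by
    have hcv2 : cv = B.mulVec (Pi.single j 1) := by
      funext i'
      rw [Matrix.mulVec_single]
      simp [hcv]
    rw [hcv2, Matrix.mulVec_mulVec, hAB, Matrix.one_mulVec]
  set Na := ∑ l, ‖cv l‖^2 with hNa
  have hq : ∑ l, ∑ m, (starRingEnd ℂ) (cv l) * (E n) l m * cv m = (starRingEnd ℂ) (cv j) := by
    have hrow : ∀ l, ∑ m, (starRingEnd ℂ) (cv l) * (E n) l m * cv m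
        = (starRingEnd ℂ) (cv l) * (E n).mulVec cv l := by
      intro l
      simp only [Matrix.mulVec, dotProduct, Finset.mul_sum]
      apply sum_congr rfl; intro m _
      ring
    simp only [hrow, hAcv]
    rw [Finset.sum_eq_single j]
    · simp
    · intro b _ hbj
      simp [Pi.single_apply, hbj]
    · intro h
      exact absurd (mem_univ j) h
  have hrQ : (∑ k ∈ range (n+d+1), ‖∑ l, cv l * w l ^ k‖^2 / ω k : ℝ)
      = ((starRingEnd ℂ) (cv j)).re := by
    have h0 := Qid cv
    rw [hq] at h0
    rw [h0, Complex.ofReal_re]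
  have hbound : Na * S ≤ C * ((starRingEnd ℂ) (cv j)).re := by
    have := coercive cv
    rw [hrQ] at this
    exact this
  have hre : ((starRingEnd ℂ) (cv j)).re ≤ ‖cv j‖ := by
    calc ((starRingEnd ℂ) (cv j)).re ≤ ‖(starRingEnd ℂ) (cv j)‖ := Complex.re_le_norm _
    _ = ‖cv j‖ := RCLike.norm_conj _
  have hsq : ∀ i' : Fin d, ‖cv i'‖^2 ≤ Na := fun i' =>
    single_le_sum (fun m _ => sq_nonneg ‖cv m‖) (mem_univ i')
  have hNann : 0 ≤ Na := sum_nonneg fun l _ => sq_nonneg _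
  show ‖B i j‖ ≤ C * S⁻¹
  rcases eq_or_lt_of_le hNann with hNa0 | hNapos
  · have h3 : ‖cv i‖^2 ≤ 0 := by rw [hNa0]; exact hsq i
    have h4 : ‖B i j‖ = 0 := by
      have : ‖cv i‖ = 0 := by nlinarith [norm_nonneg (cv i)]
      simpa [hcv] using this
    rw [h4]
    positivity
  · set s := Real.sqrt Na with hs
    have hsp : 0 < s := Real.sqrt_pos.2 hNapos
    have hss : s * s = Na := Real.mul_self_sqrt hNann
    have h2 : ‖cv j‖ ≤ s := by
      rw [hs, show ‖cv j‖ = Real.sqrt (‖cv j‖^2) from (Real.sqrt_sq (norm_nonneg _)).symm]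
      exact Real.sqrt_le_sqrt (hsq j)
    have h3 : ‖cv i‖ ≤ s := by
      rw [hs, show ‖cv i‖ = Real.sqrt (‖cv i‖^2) from (Real.sqrt_sq (norm_nonneg _)).symm]
      exact Real.sqrt_le_sqrt (hsq i)
    have h1 : Na * S ≤ C * s :=
      hbound.trans ((mul_le_mul_of_nonneg_left (hre.trans h2) hC0.le))
    have h5 : s * S ≤ C := by nlinarith
    calc ‖B i j‖ = ‖cv i‖ := rfl
    _ ≤ s := h3
    _ ≤ C * S⁻¹ := by
        rw [← div_eq_mul_inv, le_div_iff₀ hS0]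
        exact h5
end

section
/- Let f be a complex polynomial with f(0) ≠ 0 whose zeros are simple (distinct) and all satisfy |z| ≥ 1, and for each n ∈ ℕ let p_n be the n-th optimal polynomial approximant to 1/f in the Hardy space H² (weights ω_k = 1 for all k). Then there exists a constant C > 0 such that for all n ∈ ℕ, the Wiener norm ∑_k |(1 − p_n f)^(k)| of the polynomial 1 − p_n f (the sum of the absolute values of its coefficients) is at most C. -/
open Polynomial Finset

/-- The squared `H²` (Hardy space) norm of a polynomial `g = ∑ a_k z^k`:
`∑_k |a_k|²` (weights `ω_k = 1`). -/
noncomputable def hardyNormSq (g : Polynomial ℂ) : ℝ :=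
  ∑ k ∈ Finset.range (g.natDegree + 1), ‖g.coeff k‖ ^ 2

/-- The Wiener norm of a polynomial: the sum of the absolute values of its
coefficients. -/
noncomputable def wienerNorm (h : Polynomial ℂ) : ℝ :=
  ∑ k ∈ Finset.range (h.natDegree + 1), ‖h.coeff k‖

lemma wienerNorm_nonneg (g : Polynomial ℂ) : 0 ≤ wienerNorm g :=
  Finset.sum_nonneg fun _ _ => norm_nonneg _

lemma hardyNormSq_nonneg (g : Polynomial ℂ) : 0 ≤ hardyNormSq g :=
  Finset.sum_nonneg fun _ _ => sq_nonneg _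

lemma sum_norm_coeff_le (g : Polynomial ℂ) (m : ℕ) :
    ∑ i ∈ Finset.range m, ‖g.coeff i‖ ≤ wienerNorm g := by
  rcases le_or_gt m (g.natDegree + 1) with hm | hm
  · exact Finset.sum_le_sum_of_subset_of_nonneg (Finset.range_subset_range.mpr hm)
      (fun i _ _ => norm_nonneg _)
  · unfold wienerNorm
    rw [Finset.sum_subset (Finset.range_subset_range.mpr hm.le)]
    intro x hx hnx
    simp only [Finset.mem_range, not_lt] at hnx
    rw [Polynomial.coeff_eq_zero_of_natDegree_lt (by omega), norm_zero]

/-- the normalized geometric polynomial `(1/(n+1)) ∑_{k≤n} (z/w)^k` -/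
noncomputable def egeom (n : ℕ) (w : ℂ) : Polynomial ℂ :=
  ∑ k ∈ Finset.range (n + 1), Polynomial.C (((n : ℂ) + 1)⁻¹ * w⁻¹ ^ k) * Polynomial.X ^ k

lemma egeom_coeff (n : ℕ) (w : ℂ) (k : ℕ) :
    (egeom n w).coeff k = if k < n + 1 then ((n : ℂ) + 1)⁻¹ * w⁻¹ ^ k else 0 := by
  rw [egeom, Polynomial.finset_sum_coeff]
  simp_rw [Polynomial.coeff_C_mul, Polynomial.coeff_X_pow, mul_ite, mul_one, mul_zero]
  rw [Finset.sum_ite_eq (Finset.range (n + 1)) k]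
  simp [Finset.mem_range]

lemma egeom_natDegree_le (n : ℕ) (w : ℂ) : (egeom n w).natDegree ≤ n := by
  rw [Polynomial.natDegree_le_iff_coeff_eq_zero]
  intro m hm
  rw [egeom_coeff, if_neg (by omega)]

lemma egeom_eval (n : ℕ) {w : ℂ} (hw : w ≠ 0) : (egeom n w).eval w = 1 := by
  have h1 : ((n : ℂ) + 1) ≠ 0 := by
    have : ((n + 1 : ℕ) : ℂ) ≠ 0 := Nat.cast_ne_zero.mpr (Nat.succ_ne_zero n)
    push_cast at this
    exact this
  simp only [egeom, Polynomial.eval_finset_sum, Polynomial.eval_mul, Polynomial.eval_C,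
    Polynomial.eval_pow, Polynomial.eval_X]
  have : ∀ k, ((n : ℂ) + 1)⁻¹ * w⁻¹ ^ k * w ^ k = ((n : ℂ) + 1)⁻¹ := by
    intro k
    rw [mul_assoc, ← mul_pow, inv_mul_cancel₀ hw, one_pow, mul_one]
  rw [Finset.sum_congr rfl fun k _ => this k, Finset.sum_const, Finset.card_range,
    nsmul_eq_mul]
  push_cast
  field_simp

lemma egeom_coeff_norm (n : ℕ) {w : ℂ} (hw : 1 ≤ ‖w‖) (k : ℕ) :
    ‖(egeom n w).coeff k‖ ≤ ((n : ℝ) + 1)⁻¹ := by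
  have hn : (0:ℝ) < (n : ℝ) + 1 := by positivity
  rw [egeom_coeff]
  split
  · rw [norm_mul, norm_inv, norm_pow, norm_inv]
    have h1 : ‖(n : ℂ) + 1‖ = (n : ℝ) + 1 := by
      rw [show ((n : ℂ) + 1) = ((n + 1 : ℕ) : ℂ) by push_cast; ring, Complex.norm_natCast]
      push_cast; ring
    rw [h1]
    have hw1 : ‖w‖⁻¹ ≤ 1 := inv_le_one_of_one_le₀ hw
    have hw0 : (0:ℝ) ≤ ‖w‖⁻¹ := by positivity
    calc ((n:ℝ)+1)⁻¹ * ‖w‖⁻¹ ^ k ≤ ((n:ℝ)+1)⁻¹ * 1 := by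
          apply mul_le_mul_of_nonneg_left _ (by positivity)
          exact pow_le_one₀ hw0 hw1
      _ = ((n:ℝ)+1)⁻¹ := mul_one _
  · rw [norm_zero]; positivity

lemma coeff_mul_norm_le (a b : Polynomial ℂ) (M : ℝ)
    (hb : ∀ j, ‖b.coeff j‖ ≤ M) (k : ℕ) :
    ‖(a * b).coeff k‖ ≤ wienerNorm a * M := by
  have hM : 0 ≤ M := le_trans (norm_nonneg _) (hb 0)
  rw [Polynomial.coeff_mul]
  calc ‖∑ ij ∈ Finset.HasAntidiagonal.antidiagonal k, a.coeff ij.1 * b.coeff ij.2‖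
      ≤ ∑ ij ∈ Finset.HasAntidiagonal.antidiagonal k, ‖a.coeff ij.1 * b.coeff ij.2‖ := norm_sum_le _ _
    _ ≤ ∑ ij ∈ Finset.HasAntidiagonal.antidiagonal k, ‖a.coeff ij.1‖ * M := by
        refine Finset.sum_le_sum fun ij _ => ?_
        rw [norm_mul]
        exact mul_le_mul_of_nonneg_left (hb _) (norm_nonneg _)
    _ = (∑ ij ∈ Finset.HasAntidiagonal.antidiagonal k, ‖a.coeff ij.1‖) * M := by rw [Finset.sum_mul]
    _ = (∑ i ∈ Finset.range (k + 1), ‖a.coeff i‖) * M := by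
        rw [Finset.Nat.sum_antidiagonal_eq_sum_range_succ_mk]
    _ ≤ wienerNorm a * M := mul_le_mul_of_nonneg_right (sum_norm_coeff_le a _) hM

set_option maxHeartbeats 1000000 in
theorem stmt6
    (f : Polynomial ℂ) (hf0 : f.eval 0 ≠ 0)
    (hsimple : ∀ z : ℂ, Polynomial.rootMultiplicity z f ≤ 1)
    (hroots : ∀ z : ℂ, f.IsRoot z → 1 ≤ ‖z‖)
    (p : ℕ → Polynomial ℂ) (hpdeg : ∀ n, (p n).natDegree ≤ n)
    (hpopt : ∀ n, ∀ q : Polynomial ℂ, q.natDegree ≤ n →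
      hardyNormSq (1 - p n * f) ≤ hardyNormSq (1 - q * f)) :
    ∃ C : ℝ, 0 < C ∧ ∀ n : ℕ, wienerNorm (1 - p n * f) ≤ C := by
  classical
  have hf : f ≠ 0 := fun h => hf0 (by simp [h])
  set d : ℕ := f.natDegree with hd
  set s : Finset ℂ := f.roots.toFinset with hs
  have hinj : Set.InjOn id (s : Set ℂ) := Function.injective_id.injOn
  have hmem : ∀ z ∈ s, f.IsRoot z := by
    intro z hz
    rw [hs, Multiset.mem_toFinset, Polynomial.mem_roots hf] at hz
    exact hz
  have hcard : s.card ≤ d := le_trans (Multiset.toFinset_card_le _) (by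
    exact_mod_cast (Polynomial.card_roots' f))
  set L : ℂ → Polynomial ℂ := fun z => Lagrange.basis s id z with hL
  set B : ℝ := ∑ z ∈ s, wienerNorm (L z) with hB
  have hB0 : 0 ≤ B := Finset.sum_nonneg fun z _ => wienerNorm_nonneg _
  refine ⟨((d : ℝ) + 1) * B + 1, by positivity, fun n => ?_⟩
  -- the competitor polynomial
  set h : Polynomial ℂ := ∑ z ∈ s, L z * egeom n z with hh
  have hhdeg : h.natDegree ≤ n + d := by
    refine Polynomial.natDegree_sum_le_of_forall_le _ _ fun z hz => ?_
    refine le_trans (Polynomial.natDegree_mul_le) ?_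
    have h1 : (L z).natDegree = s.card - 1 := Lagrange.natDegree_basis hinj hz
    have h2 := egeom_natDegree_le n z
    omega
  have hheval : ∀ z ∈ s, h.eval z = 1 := by
    intro z hz
    rw [hh, Polynomial.eval_finset_sum]
    rw [Finset.sum_eq_single_of_mem z hz]
    · rw [Polynomial.eval_mul]
      have : (L z).eval z = 1 := Lagrange.eval_basis_self hinj hz
      rw [this, one_mul]
      have hz0 : z ≠ 0 := by
        intro h0
        have hr := hmem z hz
        rw [h0] at hr
        exact hf0 hr
      exact egeom_eval n hz0
    · intro w hw hwz
      rw [Polynomial.eval_mul]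
      have : (L w).eval z = 0 := by
        simpa using Lagrange.eval_basis_of_ne (v := id) (s := s) hwz hz
      rw [this, zero_mul]
  -- coefficient bound for h
  have hhcoeff : ∀ k, ‖h.coeff k‖ ≤ B * ((n : ℝ) + 1)⁻¹ := by
    intro k
    rw [hh, Polynomial.finset_sum_coeff]
    calc ‖∑ z ∈ s, (L z * egeom n z).coeff k‖
        ≤ ∑ z ∈ s, ‖(L z * egeom n z).coeff k‖ := norm_sum_le _ _
      _ ≤ ∑ z ∈ s, wienerNorm (L z) * ((n : ℝ) + 1)⁻¹ := by
          refine Finset.sum_le_sum fun z hz => ?_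
          exact coeff_mul_norm_le _ _ _ (egeom_coeff_norm n (hroots z (hmem z hz))) k
      _ = B * ((n : ℝ) + 1)⁻¹ := by rw [hB, Finset.sum_mul]
  -- existence of competitor q
  have hq : ∃ q : Polynomial ℂ, q.natDegree ≤ n ∧ 1 - q * f = h := by
    by_cases h1 : 1 - h = 0
    · exact ⟨0, by simp, by rw [zero_mul, sub_zero]; linear_combination h1⟩
    · have hle : f.roots ≤ (1 - h).roots := by
        rw [Multiset.le_iff_count]
        intro z
        rw [Polynomial.count_roots, Polynomial.count_roots]
        rcases Nat.eq_zero_or_pos (Polynomial.rootMultiplicity z f) with h0 | hpos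
        · rw [h0]; exact Nat.zero_le _
        · have hzr : f.IsRoot z := (Polynomial.rootMultiplicity_pos hf).mp hpos
          have hzs : z ∈ s := by
            rw [hs, Multiset.mem_toFinset, Polynomial.mem_roots hf]; exact hzr
          have : (1 - h).IsRoot z := by
            rw [Polynomial.IsRoot, Polynomial.eval_sub, Polynomial.eval_one, hheval z hzs,
              sub_self]
          have h2 : 0 < Polynomial.rootMultiplicity z (1 - h) :=
            (Polynomial.rootMultiplicity_pos h1).mpr this
          have h3 := hsimple z
          omega
      have hdvd : f ∣ 1 - h := by
        have hsplit := Polynomial.Splits.eq_prod_roots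
          (IsAlgClosed.splits (k := ℂ) f)
        have hprod : (f.roots.map fun a => Polynomial.X - Polynomial.C a).prod ∣ 1 - h :=
          (Multiset.prod_X_sub_C_dvd_iff_le_roots h1 f.roots).mpr hle
        rw [hsplit]
        have hu : IsUnit (Polynomial.C f.leadingCoeff) :=
          Polynomial.isUnit_C.mpr (Ne.isUnit (Polynomial.leadingCoeff_ne_zero.mpr hf))
        exact hu.mul_left_dvd.mpr hprod
      obtain ⟨q, hq⟩ := hdvd
      have hq0 : q ≠ 0 := by
        intro h0
        rw [h0, mul_zero] at hq
        exact h1 hq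
      refine ⟨q, ?_, by linear_combination hq⟩
      have hdeg : (1 - h).natDegree ≤ n + d := by
        refine le_trans (Polynomial.natDegree_sub_le _ _) ?_
        simp only [Polynomial.natDegree_one]
        omega
      rw [hq, Polynomial.natDegree_mul hf hq0] at hdeg
      omega
  obtain ⟨q, hqdeg, hqeq⟩ := hq
  -- Hardy norm bound
  have hhardy : hardyNormSq (1 - p n * f) ≤ ((n:ℝ) + d + 1) * (B * ((n : ℝ) + 1)⁻¹) ^ 2 := by
    refine le_trans (hpopt n q hqdeg) ?_
    rw [hqeq]
    unfold hardyNormSq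
    calc ∑ k ∈ Finset.range (h.natDegree + 1), ‖h.coeff k‖ ^ 2
        ≤ ∑ k ∈ Finset.range (h.natDegree + 1), (B * ((n : ℝ) + 1)⁻¹) ^ 2 := by
          refine Finset.sum_le_sum fun k _ => ?_
          have := hhcoeff k
          have h0 : (0:ℝ) ≤ ‖h.coeff k‖ := norm_nonneg _
          nlinarith
      _ = ((h.natDegree : ℝ) + 1) * (B * ((n : ℝ) + 1)⁻¹) ^ 2 := by
          rw [Finset.sum_const, Finset.card_range, nsmul_eq_mul]; push_cast; ring
      _ ≤ ((n:ℝ) + d + 1) * (B * ((n : ℝ) + 1)⁻¹) ^ 2 := by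
          have : (h.natDegree : ℝ) ≤ (n : ℝ) + d := by exact_mod_cast hhdeg
          nlinarith [sq_nonneg (B * ((n : ℝ) + 1)⁻¹)]
  -- Cauchy-Schwarz
  set g : Polynomial ℂ := 1 - p n * f with hg
  have hgdeg : g.natDegree ≤ n + d := by
    refine le_trans (Polynomial.natDegree_sub_le _ _) ?_
    simp only [Polynomial.natDegree_one]
    have := Polynomial.natDegree_mul_le (p := p n) (q := f)
    have := hpdeg n
    omega
  have hCS : (wienerNorm g) ^ 2 ≤ ((g.natDegree : ℝ) + 1) * hardyNormSq g := by
    unfold wienerNorm hardyNormSq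
    have := sq_sum_le_card_mul_sum_sq (s := Finset.range (g.natDegree + 1))
      (f := fun k => ‖g.coeff k‖)
    simpa [Finset.card_range] using this
  -- combine
  have hn1 : (0:ℝ) < (n:ℝ) + 1 := by positivity
  have hkey : ((n:ℝ) + d + 1) ≤ ((d:ℝ) + 1) * ((n:ℝ) + 1) := by
    have : (0:ℝ) ≤ (d:ℝ) * (n:ℝ) := by positivity
    nlinarith
  have hfin : (wienerNorm g) ^ 2 ≤ (((d:ℝ) + 1) * B) ^ 2 := by
    have h1 : (wienerNorm g) ^ 2 ≤ ((n:ℝ) + d + 1) ^ 2 * (B * ((n : ℝ) + 1)⁻¹) ^ 2 := by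
      have hgd : ((g.natDegree : ℝ) + 1) ≤ (n:ℝ) + d + 1 := by
        have : (g.natDegree : ℝ) ≤ (n:ℝ) + d := by exact_mod_cast hgdeg
        linarith
      have h2 : ((g.natDegree : ℝ) + 1) * hardyNormSq g
          ≤ ((n:ℝ) + d + 1) * (((n:ℝ) + d + 1) * (B * ((n : ℝ) + 1)⁻¹) ^ 2) := by
        have hge0 : (0:ℝ) ≤ (g.natDegree : ℝ) + 1 := by positivity
        have := hardyNormSq_nonneg g
        nlinarith [sq_nonneg (B * ((n : ℝ) + 1)⁻¹)]
      calc (wienerNorm g) ^ 2 ≤ ((g.natDegree : ℝ) + 1) * hardyNormSq g := hCS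
        _ ≤ ((n:ℝ) + d + 1) * (((n:ℝ) + d + 1) * (B * ((n : ℝ) + 1)⁻¹) ^ 2) := h2
        _ = ((n:ℝ) + d + 1) ^ 2 * (B * ((n : ℝ) + 1)⁻¹) ^ 2 := by ring
    refine le_trans h1 ?_
    have hBn : (0:ℝ) ≤ B * ((n : ℝ) + 1)⁻¹ := by positivity
    have h3 : ((n:ℝ) + d + 1) * (B * ((n : ℝ) + 1)⁻¹) ≤ ((d:ℝ) + 1) * B := by
      rw [show ((n:ℝ) + d + 1) * (B * ((n : ℝ) + 1)⁻¹)
          = (((n:ℝ) + d + 1) * ((n : ℝ) + 1)⁻¹) * B by ring]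
      refine mul_le_mul_of_nonneg_right ?_ hB0
      rw [← div_eq_mul_inv, div_le_iff₀ hn1]
      linarith
    calc ((n:ℝ) + d + 1) ^ 2 * (B * ((n : ℝ) + 1)⁻¹) ^ 2
        = (((n:ℝ) + d + 1) * (B * ((n : ℝ) + 1)⁻¹)) ^ 2 := by ring
      _ ≤ (((d:ℝ) + 1) * B) ^ 2 := by
          refine pow_le_pow_left₀ ?_ h3 2
          exact mul_nonneg (by positivity) hBn
  have hw0 := wienerNorm_nonneg g
  have hy : (0:ℝ) ≤ ((d:ℝ) + 1) * B := mul_nonneg (by positivity) hB0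
  have hsq := Real.sqrt_le_sqrt hfin
  rw [Real.sqrt_sq hw0, Real.sqrt_sq hy] at hsq
  linarith
end

section
/- Let f be a complex polynomial with f(0) ≠ 0 whose zeros are simple (distinct) and all satisfy |z| ≥ 1, and for each n ∈ ℕ let p_n be the n-th optimal polynomial approximant to 1/f in the Bergman space A² (weights ω_k = 1/(k+1)). Then there exists a constant C > 0 such that for all n ∈ ℕ, the Wiener norm ∑_k |(1 − p_n f)^(k)| of the polynomial 1 − p_n f (the sum of the absolute values of its coefficients) is at most C. -/
/-- The squared `A²` (Bergman space) norm of a polynomial `g = ∑ a_k z^k`: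
`∑_k |a_k|² / (k+1)` (weights `ω_k = 1/(k+1)`). -/
noncomputable def bergmanNormSq (g : Polynomial ℂ) : ℝ :=
  ∑ k ∈ Finset.range (g.natDegree + 1), ‖g.coeff k‖ ^ 2 / (k + 1)

open Polynomial Finset

lemma bergman_eq_sum (g : Polynomial ℂ) {N : ℕ} (h : g.natDegree + 1 ≤ N) :
    bergmanNormSq g = ∑ k ∈ range N, ‖g.coeff k‖ ^ 2 / (k + 1) := by
  unfold bergmanNormSq
  refine Finset.sum_subset ?_ ?_
  · exact Finset.range_subset_range.2 h
  · intro k hk hk2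
    have : g.natDegree < k := by simp only [Finset.mem_range] at hk hk2; omega
    rw [Polynomial.coeff_eq_zero_of_natDegree_lt this]
    simp

lemma wiener_eq_sum (g : Polynomial ℂ) {N : ℕ} (h : g.natDegree + 1 ≤ N) :
    wienerNorm g = ∑ k ∈ range N, ‖g.coeff k‖ := by
  unfold wienerNorm
  refine Finset.sum_subset (Finset.range_subset_range.2 h) ?_
  intro k hk hk2
  have : g.natDegree < k := by simp only [Finset.mem_range] at hk hk2; omega
  rw [Polynomial.coeff_eq_zero_of_natDegree_lt this]
  simp

noncomputable def Tmap (N : ℕ) : Polynomial ℂ →ₗ[ℂ] EuclideanSpace ℂ (Fin N) where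
  toFun g := WithLp.toLp 2 (fun k : Fin N => ((Real.sqrt ((k : ℕ) + 1) : ℝ) : ℂ)⁻¹ * g.coeff (k : ℕ))
  map_add' g h := by ext k; simp [mul_add]
  map_smul' c g := by ext k; simp [Polynomial.coeff_smul, smul_eq_mul]; ring

lemma normT_sq (N : ℕ) (g : Polynomial ℂ) :
    ‖Tmap N g‖ ^ 2 = ∑ k ∈ range N, ‖g.coeff k‖ ^ 2 / (k + 1) := by
  rw [EuclideanSpace.norm_eq, Real.sq_sqrt (by positivity)]
  rw [← Fin.sum_univ_eq_sum_range (fun k => ‖g.coeff k‖ ^ 2 / ((k : ℝ) + 1)) N]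
  apply Finset.sum_congr rfl
  intro k _
  have h1 : (0:ℝ) ≤ ((k : ℕ) : ℝ) + 1 := by positivity
  show ‖((Real.sqrt ((k : ℕ) + 1) : ℝ) : ℂ)⁻¹ * g.coeff (k : ℕ)‖ ^ 2 = _
  rw [norm_mul, norm_inv, Complex.norm_real, Real.norm_eq_abs,
    abs_of_nonneg (Real.sqrt_nonneg _), mul_pow, inv_pow, Real.sq_sqrt h1]
  ring

lemma normT_nonneg (N : ℕ) (g : Polynomial ℂ) : (0:ℝ) ≤ ‖Tmap N g‖ := norm_nonneg _

lemma normT_X_mul (N : ℕ) (g : Polynomial ℂ) :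
    ‖Tmap N (X * g)‖ ≤ ‖Tmap N g‖ := by
  have h2 : ‖Tmap N (X * g)‖ ^ 2 ≤ ‖Tmap N g‖ ^ 2 := by
    rw [normT_sq, normT_sq]
    cases N with
    | zero => simp
    | succ M =>
      have e1 : ∑ k ∈ range (M+1), ‖(X * g).coeff k‖ ^ 2 / ((k:ℝ) + 1)
          = ∑ i ∈ range M, ‖g.coeff i‖ ^ 2 / ((i:ℝ) + 2) := by
        rw [Finset.sum_range_succ']
        have h0 : (X * g).coeff 0 = 0 := by simp
        rw [h0]
        norm_num
        apply Finset.sum_congr rfl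
        intro i _
        ring_nf
      rw [e1]
      have e2 : ∑ i ∈ range M, ‖g.coeff i‖ ^ 2 / ((i:ℝ) + 2)
          ≤ ∑ i ∈ range M, ‖g.coeff i‖ ^ 2 / ((i:ℝ) + 1) := by
        apply Finset.sum_le_sum
        intro i _
        gcongr
        linarith
      refine e2.trans ?_
      apply Finset.sum_le_sum_of_subset_of_nonneg (Finset.range_subset_range.2 (Nat.le_succ M))
      intro i _ _
      positivity
  exact (pow_le_pow_iff_left₀ (norm_nonneg _) (norm_nonneg _) two_ne_zero).mp h2

lemma normT_Xpow_mul (N : ℕ) (i : ℕ) (g : Polynomial ℂ) :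
    ‖Tmap N (X ^ i * g)‖ ≤ ‖Tmap N g‖ := by
  induction i generalizing g with
  | zero => simp
  | succ j ih =>
    have h : (X : Polynomial ℂ) ^ (j+1) * g = X ^ j * (X * g) := by ring
    rw [h]
    exact le_trans (ih (X * g)) (normT_X_mul N g)

lemma normT_C_mul (N : ℕ) (c : ℂ) (g : Polynomial ℂ) :
    ‖Tmap N (C c * g)‖ = ‖c‖ * ‖Tmap N g‖ := by
  rw [← Polynomial.smul_eq_C_mul, map_smul, norm_smul]

lemma normT_mul_le (N : ℕ) (e g : Polynomial ℂ) :
    ‖Tmap N (e * g)‖ ≤ (∑ i ∈ range (e.natDegree + 1), ‖e.coeff i‖) * ‖Tmap N g‖ := by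
  conv_lhs => rw [Polynomial.as_sum_range' e (e.natDegree + 1) (Nat.lt_succ_self _)]
  rw [Finset.sum_mul, map_sum]
  refine le_trans (norm_sum_le _ _) ?_
  rw [Finset.sum_mul]
  apply Finset.sum_le_sum
  intro i _
  rw [← Polynomial.C_mul_X_pow_eq_monomial, mul_assoc, normT_C_mul]
  exact mul_le_mul_of_nonneg_left (normT_Xpow_mul N i g) (norm_nonneg _)

lemma gauss_sum (N : ℕ) : ∑ k ∈ range N, ((k:ℝ) + 1) = N * (N + 1) / 2 := by
  induction N with
  | zero => simp
  | succ M ih => rw [Finset.sum_range_succ, ih]; push_cast; ring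

lemma wiener_sq_le (g : Polynomial ℂ) {N : ℕ} (h : g.natDegree + 1 ≤ N) :
    wienerNorm g ^ 2 ≤ bergmanNormSq g * (∑ k ∈ range N, ((k:ℝ) + 1)) := by
  rw [wiener_eq_sum g h, bergman_eq_sum g h]
  have key := Finset.sum_mul_sq_le_sq_mul_sq (range N)
    (fun k => ‖g.coeff k‖ / Real.sqrt ((k:ℝ) + 1)) (fun k => Real.sqrt ((k:ℝ) + 1))
  have e1 : ∀ k ∈ range N, ‖g.coeff k‖ / Real.sqrt ((k:ℝ) + 1) * Real.sqrt ((k:ℝ) + 1)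
      = ‖g.coeff k‖ := by
    intro k _
    rw [div_mul_cancel₀]
    exact Real.sqrt_ne_zero'.2 (by positivity)
  have e2 : ∀ k ∈ range N, (‖g.coeff k‖ / Real.sqrt ((k:ℝ) + 1)) ^ 2
      = ‖g.coeff k‖ ^ 2 / ((k:ℝ) + 1) := by
    intro k _
    rw [div_pow, Real.sq_sqrt (by positivity)]
  have e3 : ∀ k ∈ range N, (Real.sqrt ((k:ℝ) + 1)) ^ 2 = ((k:ℝ) + 1) := by
    intro k _
    exact Real.sq_sqrt (by positivity)
  rw [Finset.sum_congr rfl e1, Finset.sum_congr rfl e2, Finset.sum_congr rfl e3] at key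
  exact key

set_option maxHeartbeats 1000000 in
lemma key (f : Polynomial ℂ) (hf0 : f.eval 0 ≠ 0)
    (hsimple : ∀ z : ℂ, Polynomial.rootMultiplicity z f ≤ 1)
    (hroots : ∀ z : ℂ, f.IsRoot z → 1 ≤ ‖z‖) :
    ∃ A : ℝ, 0 ≤ A ∧ ∀ n : ℕ, ∃ q : Polynomial ℂ, q.natDegree ≤ n ∧
      bergmanNormSq (1 - q * f) * (∑ k ∈ range (n + f.natDegree + 1), ((k:ℝ) + 1)) ≤ A ^ 2 := by
  have hfne : f ≠ 0 := fun h => hf0 (by simp [h])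
  by_cases hd : f.natDegree = 0
  · refine ⟨0, le_refl 0, fun n => ?_⟩
    have hc : f.coeff 0 ≠ 0 := by rwa [Polynomial.coeff_zero_eq_eval_zero]
    refine ⟨C (f.coeff 0)⁻¹, by simp, ?_⟩
    have h1 : C (f.coeff 0)⁻¹ * f = 1 := by
      nth_rewrite 2 [Polynomial.eq_C_of_natDegree_eq_zero hd]
      rw [← C_mul, inv_mul_cancel₀ hc, C_1]
    rw [h1, sub_self]
    have h2 : bergmanNormSq 0 = 0 := by unfold bergmanNormSq; simp
    rw [h2, zero_mul]
    norm_num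
  · -- nonconstant case
    set d := f.natDegree with hdd
    have hd1 : 1 ≤ d := Nat.one_le_iff_ne_zero.2 hd
    set S : Finset ℂ := f.roots.toFinset with hS
    have hnodup : f.roots.Nodup := by
      rw [Multiset.nodup_iff_count_le_one]
      intro a; rw [Polynomial.count_roots]; exact hsimple a
    have hSval : S.val = f.roots := by
      rw [hS, Multiset.toFinset_val, Multiset.dedup_eq_self.2 hnodup]
    have hmem : ∀ ρ, ρ ∈ S ↔ f.IsRoot ρ := by
      intro ρ
      rw [hS, Multiset.mem_toFinset, Polynomial.mem_roots hfne]
    have hnorm1 : ∀ ρ ∈ S, 1 ≤ ‖ρ‖ := fun ρ hρ => hroots ρ ((hmem ρ).1 hρ)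
    have hrne : ∀ ρ ∈ S, ρ ≠ 0 := by
      intro ρ hρ h0
      have := hnorm1 ρ hρ
      rw [h0] at this; simp at this; linarith
    have hinv1 : ∀ ρ ∈ S, ‖ρ⁻¹‖ ≤ 1 := by
      intro ρ hρ
      rw [norm_inv]
      exact inv_le_one_of_one_le₀ (hnorm1 ρ hρ)
    have hcard : S.card = d := by
      have h1 : S.card = Multiset.card f.roots := by rw [← hSval]; rfl
      rw [h1]
      exact (Polynomial.splits_iff_card_roots).1 (IsAlgClosed.splits f)
    have hprod : f = C f.leadingCoeff * ∏ ρ ∈ S, (X - C ρ) := by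
      have h1 := (Polynomial.C_leadingCoeff_mul_prod_multiset_X_sub_C
        ((Polynomial.splits_iff_card_roots).1 (IsAlgClosed.splits f))).symm
      rw [Finset.prod_eq_multiset_prod, hSval]
      exact h1
    -- Lagrange basis
    set e : ℂ → Polynomial ℂ := fun ρ => ∏ σ ∈ S.erase ρ, (C (ρ - σ)⁻¹ * (X - C σ)) with he
    have hEdeg : ∀ ρ ∈ S, (e ρ).natDegree ≤ d - 1 := by
      intro ρ hρ
      refine le_trans (Polynomial.natDegree_prod_le _ _) ?_
      have : ∀ σ ∈ S.erase ρ, (C (ρ - σ)⁻¹ * (X - C σ)).natDegree ≤ 1 := by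
        intro σ _
        refine le_trans (Polynomial.natDegree_mul_le) ?_
        simp [Polynomial.natDegree_X_sub_C]
      refine le_trans (Finset.sum_le_card_nsmul _ _ 1 this) ?_
      simp [Finset.card_erase_of_mem hρ, hcard]
    have hEevalself : ∀ ρ ∈ S, (e ρ).eval ρ = 1 := by
      intro ρ hρ
      rw [he]
      simp only [Polynomial.eval_prod, Polynomial.eval_mul, Polynomial.eval_C,
        Polynomial.eval_sub, Polynomial.eval_X]
      apply Finset.prod_eq_one
      intro σ hσ
      have hne : σ ≠ ρ := (Finset.mem_erase.1 hσ).1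
      exact inv_mul_cancel₀ (sub_ne_zero.2 (fun h => hne (by rw [h])))
    have hEevalother : ∀ ρ ∈ S, ∀ τ ∈ S, τ ≠ ρ → (e ρ).eval τ = 0 := by
      intro ρ hρ τ hτ hne
      rw [he]
      simp only [Polynomial.eval_prod]
      apply Finset.prod_eq_zero (Finset.mem_erase.2 ⟨hne, hτ⟩)
      simp
    set A0 : ℝ := ∑ ρ ∈ S, (∑ i ∈ range ((e ρ).natDegree + 1), ‖(e ρ).coeff i‖) with hA0
    have hA0nn : 0 ≤ A0 :=
      Finset.sum_nonneg fun ρ _ => Finset.sum_nonneg fun i _ => norm_nonneg _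
    refine ⟨(d+1) * A0, by positivity, fun n => ?_⟩
    set W : ℝ := ∑ k ∈ range (n+2), ((k:ℝ)+1) with hW
    have hWpos : 0 < W := by
      rw [hW, gauss_sum]; positivity
    set Psi : ℂ → Polynomial ℂ :=
      fun ρ => ∑ k ∈ range (n+2), C (((((k:ℝ)+1)/W : ℝ) : ℂ) * (ρ⁻¹)^k) * X^k with hPsi
    have hPsiDeg : ∀ ρ, (Psi ρ).natDegree ≤ n+1 := by
      intro ρ
      apply Polynomial.natDegree_sum_le_of_forall_le
      intro k hk
      refine le_trans (Polynomial.natDegree_C_mul_le _ _) ?_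
      rw [Polynomial.natDegree_X_pow]
      exact Nat.lt_succ_iff.1 (mem_range.1 hk)
    have hPsiEval : ∀ ρ ∈ S, (Psi ρ).eval ρ = 1 := by
      intro ρ hρ
      rw [hPsi]
      simp only [Polynomial.eval_finset_sum, Polynomial.eval_mul, Polynomial.eval_C,
        Polynomial.eval_pow, Polynomial.eval_X]
      have h1 : ∀ k ∈ range (n+2),
          ((((k:ℝ)+1)/W : ℝ) : ℂ) * (ρ⁻¹)^k * ρ^k = ((((k:ℝ)+1)/W : ℝ) : ℂ) := by
        intro k _
        rw [mul_assoc, ← mul_pow, inv_mul_cancel₀ (hrne ρ hρ), one_pow, mul_one]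
      rw [Finset.sum_congr rfl h1, ← Complex.ofReal_sum]
      have h2 : ∑ k ∈ range (n+2), (((k:ℝ)+1)/W) = 1 := by
        rw [← Finset.sum_div, ← hW, div_self (ne_of_gt hWpos)]
      rw [h2, Complex.ofReal_one]
    have hPsiCoeff : ∀ ρ j, (Psi ρ).coeff j =
        if j ∈ range (n+2) then ((((j:ℝ)+1)/W : ℝ) : ℂ) * (ρ⁻¹)^j else 0 := by
      intro ρ j
      rw [hPsi, Polynomial.finset_sum_coeff]
      simp only [Polynomial.coeff_C_mul, Polynomial.coeff_X_pow, mul_ite, mul_one, mul_zero]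
      rw [Finset.sum_ite_eq]
    have hPsiNormSq : ∀ ρ ∈ S, ‖Tmap (n+d+1) (Psi ρ)‖^2 ≤ 1/W := by
      intro ρ hρ
      rw [normT_sq]
      have hsub : range (n+2) ⊆ range (n+d+1) := Finset.range_subset_range.2 (by omega)
      have h1 : ∑ k ∈ range (n+d+1), ‖(Psi ρ).coeff k‖^2/((k:ℝ)+1)
          = ∑ k ∈ range (n+2), ‖(Psi ρ).coeff k‖^2/((k:ℝ)+1) := by
        symm
        apply Finset.sum_subset hsub
        intro k _ hk2
        rw [hPsiCoeff ρ k, if_neg hk2]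
        simp
      rw [h1]
      have h2 : ∀ k ∈ range (n+2), ‖(Psi ρ).coeff k‖^2/((k:ℝ)+1) ≤ ((k:ℝ)+1)/W^2 := by
        intro k hk
        rw [hPsiCoeff ρ k, if_pos hk]
        have hn1 : ‖((((k:ℝ)+1)/W : ℝ) : ℂ) * (ρ⁻¹)^k‖ ≤ ((k:ℝ)+1)/W := by
          rw [norm_mul, Complex.norm_real, Real.norm_eq_abs,
            abs_of_nonneg (div_nonneg (by positivity) hWpos.le), norm_pow]
          calc ((k:ℝ)+1)/W * ‖ρ⁻¹‖^k ≤ ((k:ℝ)+1)/W * 1 := by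
                apply mul_le_mul_of_nonneg_left _ (div_nonneg (by positivity) hWpos.le)
                exact pow_le_one₀ (norm_nonneg _) (hinv1 ρ hρ)
            _ = ((k:ℝ)+1)/W := mul_one _
        calc ‖((((k:ℝ)+1)/W : ℝ) : ℂ) * (ρ⁻¹)^k‖^2/((k:ℝ)+1)
            ≤ (((k:ℝ)+1)/W)^2/((k:ℝ)+1) := by
              gcongr
          _ = ((k:ℝ)+1)/W^2 := by
              field_simp
      refine le_trans (Finset.sum_le_sum h2) ?_
      rw [← Finset.sum_div, ← hW, pow_two, div_mul_eq_div_div, div_self (ne_of_gt hWpos)]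
    set Phi : Polynomial ℂ := ∑ ρ ∈ S, Psi ρ * e ρ with hPhi
    have hPhiDeg : Phi.natDegree ≤ n + d := by
      apply Polynomial.natDegree_sum_le_of_forall_le
      intro ρ hρ
      refine le_trans Polynomial.natDegree_mul_le ?_
      have h1 := hPsiDeg ρ
      have h2 := hEdeg ρ hρ
      omega
    have hPhiEval : ∀ τ ∈ S, Phi.eval τ = 1 := by
      intro τ hτ
      rw [hPhi, Polynomial.eval_finset_sum, Finset.sum_eq_single_of_mem τ hτ]
      · rw [Polynomial.eval_mul, hPsiEval τ hτ, hEevalself τ hτ, one_mul]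
      · intro ρ hρ hne
        rw [Polynomial.eval_mul, hEevalother ρ hρ τ hτ (Ne.symm hne), mul_zero]
    have hdvdP : (∏ ρ ∈ S, (X - C ρ)) ∣ 1 - Phi := by
      apply Finset.prod_dvd_of_coprime
      · intro a ha b hb hab
        refine ⟨C ((b-a)⁻¹), -C ((b-a)⁻¹), ?_⟩
        have h1 : C ((b-a)⁻¹) * (X - C a) + (-C ((b-a)⁻¹)) * (X - C b)
            = C ((b-a)⁻¹) * (C b - C a) := by ring
        rw [h1, ← C_sub, ← C_mul, inv_mul_cancel₀ (sub_ne_zero.2 (Ne.symm hab)), C_1]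
      · intro τ hτ
        rw [Polynomial.dvd_iff_isRoot, Polynomial.IsRoot, Polynomial.eval_sub,
          Polynomial.eval_one, hPhiEval τ hτ, sub_self]
    have hdvd : f ∣ 1 - Phi := by
      obtain ⟨q0, hq0⟩ := hdvdP
      have hlcne : f.leadingCoeff ≠ 0 := Polynomial.leadingCoeff_ne_zero.2 hfne
      set lc := f.leadingCoeff with hlc
      have hunit : (C lc) * (C lc⁻¹) = (1 : Polynomial ℂ) := by
        rw [← C_mul, mul_inv_cancel₀ hlcne, C_1]
      refine ⟨C lc⁻¹ * q0, ?_⟩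
      rw [hq0]
      conv_rhs => rw [hprod]
      calc (∏ ρ ∈ S, (X - C ρ)) * q0
          = ((C lc) * (C lc⁻¹)) * ((∏ ρ ∈ S, (X - C ρ)) * q0) := by rw [hunit, one_mul]
        _ = C lc * (∏ ρ ∈ S, (X - C ρ)) * (C lc⁻¹ * q0) := by ring
    obtain ⟨q, hq⟩ := hdvd
    have hqdeg : q.natDegree ≤ n := by
      by_cases hq0 : q = 0
      · simp [hq0]
      · have h1 : (1 - Phi).natDegree = d + q.natDegree := by
          rw [hq, Polynomial.natDegree_mul hfne hq0]
        have h2 : (1 - Phi).natDegree ≤ n + d := by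
          refine le_trans (Polynomial.natDegree_sub_le _ _) ?_
          simp only [Polynomial.natDegree_one, max_le_iff]
          exact ⟨by omega, hPhiDeg⟩
        omega
    refine ⟨q, hqdeg, ?_⟩
    have hqf : 1 - q * f = Phi := by
      have h1 : 1 - Phi = f * q := hq
      linear_combination h1
    rw [hqf]
    have hdegPhi1 : Phi.natDegree + 1 ≤ n+d+1 := by omega
    have hbp : bergmanNormSq Phi = ‖Tmap (n+d+1) Phi‖^2 := by
      rw [bergman_eq_sum Phi hdegPhi1, normT_sq]
    have hTPhi : ‖Tmap (n+d+1) Phi‖ ≤ A0 * Real.sqrt (1/W) := by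
      rw [hPhi, map_sum]
      refine le_trans (norm_sum_le _ _) ?_
      rw [hA0, Finset.sum_mul]
      apply Finset.sum_le_sum
      intro ρ hρ
      rw [mul_comm (Psi ρ) (e ρ)]
      refine le_trans (normT_mul_le (n+d+1) (e ρ) (Psi ρ)) ?_
      refine mul_le_mul_of_nonneg_left ?_ (Finset.sum_nonneg fun i _ => norm_nonneg _)
      have h3 : ‖Tmap (n+d+1) (Psi ρ)‖ = Real.sqrt (‖Tmap (n+d+1) (Psi ρ)‖^2) :=
        (Real.sqrt_sq (norm_nonneg _)).symm
      rw [h3]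
      exact Real.sqrt_le_sqrt (hPsiNormSq ρ hρ)
    have hbPhi : bergmanNormSq Phi ≤ A0^2 * (1/W) := by
      rw [hbp]
      calc ‖Tmap (n+d+1) Phi‖^2 ≤ (A0 * Real.sqrt (1/W))^2 :=
            pow_le_pow_left₀ (norm_nonneg _) hTPhi 2
        _ = A0^2 * (1/W) := by
            rw [mul_pow, Real.sq_sqrt (one_div_nonneg.2 hWpos.le)]
    have hVle : (∑ k ∈ range (n + d + 1), ((k:ℝ)+1)) ≤ (d+1)^2 * W := by
      rw [gauss_sum, hW, gauss_sum]
      have hdr : (1:ℝ) ≤ (d:ℝ) := by exact_mod_cast hd1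
      have hnn : (0:ℝ) ≤ (n:ℝ) := Nat.cast_nonneg n
      have key1 : (n:ℝ)+d+1 ≤ ((d:ℝ)+1)*((n:ℝ)+2) := by nlinarith
      have key2 : (n:ℝ)+d+2 ≤ ((d:ℝ)+1)*((n:ℝ)+3) := by nlinarith
      have key3 := mul_le_mul key1 key2 (by linarith) (by nlinarith)
      push_cast
      nlinarith [key3]
    have hVnn : (0:ℝ) ≤ ∑ k ∈ range (n + d + 1), ((k:ℝ)+1) :=
      Finset.sum_nonneg fun k _ => by positivity
    have hWne : W ≠ 0 := ne_of_gt hWpos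
    have hfin : (A0^2 * (1/W)) * (((d:ℝ)+1)^2 * W) = (((d:ℝ)+1)*A0)^2 := by
      have h9 : (A0^2 * (1/W)) * (((d:ℝ)+1)^2 * W) = (W/W) * (((d:ℝ)+1)*A0)^2 := by
        ring
      rw [h9, div_self hWne, one_mul]
    refine le_trans (mul_le_mul hbPhi hVle hVnn
      (mul_nonneg (pow_nonneg hA0nn 2) (one_div_nonneg.2 hWpos.le))) (le_of_eq hfin)



theorem stmt7
    (f : Polynomial ℂ) (hf0 : f.eval 0 ≠ 0)
    (hsimple : ∀ z : ℂ, Polynomial.rootMultiplicity z f ≤ 1)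
    (hroots : ∀ z : ℂ, f.IsRoot z → 1 ≤ ‖z‖)
    (p : ℕ → Polynomial ℂ) (hpdeg : ∀ n, (p n).natDegree ≤ n)
    (hpopt : ∀ n, ∀ q : Polynomial ℂ, q.natDegree ≤ n →
      bergmanNormSq (1 - p n * f) ≤ bergmanNormSq (1 - q * f)) :
    ∃ C : ℝ, 0 < C ∧ ∀ n : ℕ, wienerNorm (1 - p n * f) ≤ C := by
  obtain ⟨A, hA0, hA⟩ := key f hf0 hsimple hroots
  refine ⟨A + 1, by linarith, fun n => ?_⟩
  obtain ⟨q, hqdeg, hqb⟩ := hA n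
  have hdeg : (1 - p n * f).natDegree + 1 ≤ n + f.natDegree + 1 := by
    have h1 : (1 - p n * f).natDegree ≤ n + f.natDegree := by
      refine le_trans (Polynomial.natDegree_sub_le _ _) ?_
      simp only [Polynomial.natDegree_one, max_le_iff]
      refine ⟨by omega, le_trans Polynomial.natDegree_mul_le ?_⟩
      have := hpdeg n
      omega
    omega
  have h2 := wiener_sq_le (1 - p n * f) hdeg
  have h3 := hpopt n q hqdeg
  have hVnn : (0:ℝ) ≤ ∑ k ∈ range (n + f.natDegree + 1), ((k:ℝ)+1) :=
    Finset.sum_nonneg fun k _ => by positivity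
  have h4 : wienerNorm (1 - p n * f) ^ 2 ≤ A ^ 2 :=
    le_trans h2 (le_trans (mul_le_mul_of_nonneg_right h3 hVnn) hqb)
  have h5 : 0 ≤ wienerNorm (1 - p n * f) := by
    unfold wienerNorm
    positivity
  have h6 : wienerNorm (1 - p n * f) ≤ A := by
    have h7 := Real.sqrt_le_sqrt h4
    rwa [Real.sqrt_sq h5, Real.sqrt_sq hA0] at h7
  linarith
end
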